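/- arXiv:2509.23857 — 8 statements merged into one kernel-verified Lean document; each statement's English description precedes it below -/
import Mathlib

section
/- Let K be a totally real number field and let Q(x,y) = αx² + βxy + γy² be a totally positive definite binary quadratic form with coefficients in the ring of integers O_K. If α and γ are indecomposable totally positive integers of O_K (i.e., neither can be written as a sum of two totally positive integers) and β ≠ 0, then Q is additively indecomposable, i.e., Q cannot be written as Q₁ + Q₂ where Q₁, Q₂ are nonzero totally positive semi-definite binary quadratic forms over O_K. -/
open NumberField

variable {K : Type*}

/-- An algebraic integer is totally positive if it is positive under every real embedding. -/
def TPos [Field K] [NumberField K] (x : 𝓞 K) : Prop :=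
  ∀ φ : K →+* ℝ, 0 < φ (algebraMap (𝓞 K) K x)

/-- Totally positive or zero. -/
def TNonneg [Field K] [NumberField K] (x : 𝓞 K) : Prop :=
  TPos x ∨ x = 0

/-- An indecomposable totally positive algebraic integer. -/
def IndecElem [Field K] [NumberField K] (x : 𝓞 K) : Prop :=
  TPos x ∧ ¬ ∃ y z : 𝓞 K, TPos y ∧ TPos z ∧ x = y + z

/-- The binary quadratic form a x² + b x y + c y² is totally positive semi-definite. -/
def BinSemiDef [Field K] [NumberField K] (a b c : 𝓞 K) : Prop :=
  ∀ x y : 𝓞 K, TNonneg (a * x ^ 2 + b * x * y + c * y ^ 2)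

/-- The binary quadratic form a x² + b x y + c y² is totally positive definite. -/
def BinPosDef [Field K] [NumberField K] (a b c : 𝓞 K) : Prop :=
  BinSemiDef a b c ∧
    ∀ x y : 𝓞 K, a * x ^ 2 + b * x * y + c * y ^ 2 = 0 → x = 0 ∧ y = 0

/-- Additive indecomposability: the form is not a sum of two nonzero totally positive
semi-definite binary quadratic forms. -/
def BinIndec [Field K] [NumberField K] (a b c : 𝓞 K) : Prop :=
  ¬ ∃ a₁ b₁ c₁ a₂ b₂ c₂ : 𝓞 K,
      BinSemiDef a₁ b₁ c₁ ∧ BinSemiDef a₂ b₂ c₂ ∧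
      ¬(a₁ = 0 ∧ b₁ = 0 ∧ c₁ = 0) ∧ ¬(a₂ = 0 ∧ b₂ = 0 ∧ c₂ = 0) ∧
      a = a₁ + a₂ ∧ b = b₁ + b₂ ∧ c = c₁ + c₂

/-- Additive indecomposability into classical forms (off-diagonal coefficients even). -/
def BinIndecCl [Field K] [NumberField K] (a b c : 𝓞 K) : Prop :=
  ¬ ∃ a₁ b₁ c₁ a₂ b₂ c₂ : 𝓞 K,
      2 ∣ b₁ ∧ 2 ∣ b₂ ∧
      BinSemiDef a₁ b₁ c₁ ∧ BinSemiDef a₂ b₂ c₂ ∧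
      ¬(a₁ = 0 ∧ b₁ = 0 ∧ c₁ = 0) ∧ ¬(a₂ = 0 ∧ b₂ = 0 ∧ c₂ = 0) ∧
      a = a₁ + a₂ ∧ b = b₁ + b₂ ∧ c = c₁ + c₂

section AuxProof

variable [Field K] [NumberField K]

lemma aux_real_embedding (htr : ∀ φ : K →+* ℂ, ∀ x : K, (φ x).im = 0) :
    Nonempty (K →+* ℝ) := by
  obtain ⟨ψ⟩ := (inferInstance : Nonempty (K →+* ℂ))
  exact ⟨{ toFun := fun x => (ψ x).re
           map_one' := by simp
           map_zero' := by simp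
           map_add' := fun x y => by simp
           map_mul' := fun x y => by
             simp [Complex.mul_re, htr ψ x, htr ψ y] }⟩

lemma aux_tpos_of_ne {x : 𝓞 K} (h : TNonneg x) (hx : x ≠ 0) : TPos x :=
  h.resolve_right hx

lemma aux_a_nonneg {a b c : 𝓞 K} (h : BinSemiDef a b c) : TNonneg a := by
  have := h 1 0; simpa using this

lemma aux_c_nonneg {a b c : 𝓞 K} (h : BinSemiDef a b c) : TNonneg c := by
  have := h 0 1; simpa using this

lemma aux_semidef_swap {a b c : 𝓞 K} (h : BinSemiDef a b c) : BinSemiDef c b a := by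
  intro x y
  have := h y x
  have he : a * y ^ 2 + b * y * x + c * x ^ 2 = c * x ^ 2 + b * x * y + a * y ^ 2 := by ring
  rwa [he] at this

lemma aux_b_eq_zero (hreal : Nonempty (K →+* ℝ)) {a b c : 𝓞 K}
    (h : BinSemiDef a b c) (ha : a = 0) : b = 0 := by
  by_contra hb
  obtain ⟨φ⟩ := hreal
  have hbK : φ (algebraMap (𝓞 K) K b) ≠ 0 := by
    intro h0
    exact hb (NumberField.RingOfIntegers.coe_injective (φ.injective (by simpa using h0)))
  set t := φ (algebraMap (𝓞 K) K b) with htdef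
  set s := φ (algebraMap (𝓞 K) K c) with hsdef
  -- choose n : ℕ with n * |t| > |s|
  obtain ⟨n, hn⟩ := exists_nat_gt (|s| / |t|)
  have htpos : 0 < |t| := abs_pos.mpr hbK
  have hn' : |s| < n * |t| := by
    rw [div_lt_iff₀ htpos] at hn; linarith
  -- choose x so that φ(b x + c) < 0
  have key : ∀ x : 𝓞 K, φ (algebraMap (𝓞 K) K (b * x + c)) < 0 → False := by
    intro x hneg
    have := h x 1
    rw [ha] at this
    have he : (0 : 𝓞 K) * x ^ 2 + b * x * 1 + c * 1 ^ 2 = b * x + c := by ring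
    rw [he] at this
    rcases this with hp | h0
    · exact absurd (hp φ) (not_lt.mpr hneg.le)
    · rw [h0] at hneg; simp at hneg
  rcases lt_or_gt_of_ne hbK with htneg | htposi
  · apply key (n : 𝓞 K)
    have : φ (algebraMap (𝓞 K) K (b * (n : 𝓞 K) + c)) = t * n + s := by
      push_cast [map_add, map_mul]
      simp [htdef, hsdef]
    rw [this]
    have h1 : |t| = -t := abs_of_neg htneg
    have h2 : s ≤ |s| := le_abs_self s
    nlinarith
  · apply key (-(n : 𝓞 K))
    have : φ (algebraMap (𝓞 K) K (b * (-(n : 𝓞 K)) + c)) = t * (-n) + s := by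
      push_cast [map_add, map_mul, map_neg]
      simp [htdef, hsdef]
    rw [this]
    have h1 : |t| = t := abs_of_pos htposi
    have h2 : s ≤ |s| := le_abs_self s
    nlinarith

lemma aux_main_case (hreal : Nonempty (K →+* ℝ)) {β γ a₁ b₁ c₁ a₂ b₂ c₂ : 𝓞 K}
    (h1 : BinSemiDef a₁ b₁ c₁) (h2 : BinSemiDef a₂ b₂ c₂)
    (hn1 : ¬(a₁ = 0 ∧ b₁ = 0 ∧ c₁ = 0))
    (hγ : IndecElem γ) (hβ : β ≠ 0)
    (hb : β = b₁ + b₂) (hc : γ = c₁ + c₂) (ha1 : a₁ = 0) : False := by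
  have hb1 : b₁ = 0 := aux_b_eq_zero hreal h1 ha1
  have hc1 : c₁ ≠ 0 := fun h => hn1 ⟨ha1, hb1, h⟩
  have hc1p : TPos c₁ := aux_tpos_of_ne (aux_c_nonneg h1) hc1
  by_cases hc2 : c₂ = 0
  · have hb2 : b₂ = 0 := aux_b_eq_zero hreal (aux_semidef_swap h2) hc2
    exact hβ (by rw [hb, hb1, hb2, add_zero])
  · exact hγ.2 ⟨c₁, c₂, hc1p, aux_tpos_of_ne (aux_c_nonneg h2) hc2, hc⟩

end AuxProof

theorem stmt0 [Field K] [NumberField K]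
    (htotallyReal : ∀ φ : K →+* ℂ, ∀ x : K, (φ x).im = 0)
    (α β γ : 𝓞 K) (hpd : BinPosDef α β γ)
    (hα : IndecElem α) (hγ : IndecElem γ) (hβ : β ≠ 0) :
    BinIndec α β γ := by
  have hreal : Nonempty (K →+* ℝ) := aux_real_embedding htotallyReal
  rintro ⟨a₁, b₁, c₁, a₂, b₂, c₂, h1, h2, hn1, hn2, ha, hb, hc⟩
  have ha1n : TNonneg a₁ := aux_a_nonneg h1
  have ha2n : TNonneg a₂ := aux_a_nonneg h2
  have hsplit : a₁ = 0 ∨ a₂ = 0 := by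
    by_contra h
    push_neg at h
    exact hα.2 ⟨a₁, a₂, aux_tpos_of_ne ha1n h.1, aux_tpos_of_ne ha2n h.2, ha⟩
  rcases hsplit with h0 | h0
  · exact aux_main_case hreal h1 h2 hn1 hγ hβ hb hc h0
  · exact aux_main_case hreal h2 h1 hn2 hγ hβ (by rw [hb, add_comm]) (by rw [hc, add_comm]) h0
end

section
/- Over every totally real number field K, the binary quadratic form Q(x,y) = x² + xy + y² is totally positive definite and additively indecomposable over O_K. -/
open NumberField

variable {K : Type*}

/-! ### Auxiliary lemmas -/

/-- Build a real embedding from a complex embedding with real values. -/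
noncomputable def mkRealEmb [Field K] (φ : K →+* ℂ) (h : ∀ x : K, (φ x).im = 0) : K →+* ℝ where
  toFun x := (φ x).re
  map_one' := by simp
  map_mul' x y := by simp only [map_mul, Complex.mul_re, h]; ring
  map_zero' := by simp
  map_add' x y := by simp only [map_add, Complex.add_re]

lemma mkRealEmb_apply [Field K] (φ : K →+* ℂ) (h : ∀ x : K, (φ x).im = 0) (x : K) :
    mkRealEmb φ h x = (φ x).re := rfl

lemma elt_eq_zero_of_emb [Field K] [NumberField K] (ψ : K →+* ℝ) {x : 𝓞 K}
    (h : ψ (algebraMap (𝓞 K) K x) = 0) : x = 0 := by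
  have h1 : algebraMap (𝓞 K) K x = 0 := by
    have := ψ.injective
    apply this
    rw [h, map_zero]
  have h2 := IsFractionRing.injective (𝓞 K) K
  apply h2
  rw [h1, map_zero]

lemma tnonneg_nonneg [Field K] [NumberField K] (ψ : K →+* ℝ) {t : 𝓞 K} (h : TNonneg t) :
    0 ≤ ψ (algebraMap (𝓞 K) K t) := by
  rcases h with h | h
  · exact le_of_lt (h ψ)
  · rw [h, map_zero, map_zero]

/-- 1 is additively indecomposable among totally positive integers. -/
lemma one_indec [Field K] [NumberField K]
    (htR : ∀ φ : K →+* ℂ, ∀ x : K, (φ x).im = 0)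
    {a b : 𝓞 K} (ha : TPos a) (hb : TPos b) (hab : a + b = 1) : False := by
  have key : ∀ σ : K →ₐ[ℚ] ℂ, 0 < ‖σ (algebraMap (𝓞 K) K a)‖ ∧
      ‖σ (algebraMap (𝓞 K) K a)‖ < 1 := by
    intro σ
    set ψ := mkRealEmb σ.toRingHom (htR σ.toRingHom) with hψ
    have h1 : ψ (algebraMap (𝓞 K) K a) + ψ (algebraMap (𝓞 K) K b) = 1 := by
      rw [← map_add, ← map_add, hab, map_one, map_one]
    have hpa := ha ψ
    have hpb := hb ψ
    have him : (σ (algebraMap (𝓞 K) K a)).im = 0 := htR σ.toRingHom _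
    have hre : σ (algebraMap (𝓞 K) K a) = ((ψ (algebraMap (𝓞 K) K a) : ℝ) : ℂ) := by
      apply Complex.ext
      · rfl
      · simp [him]
    rw [hre, Complex.norm_real, Real.norm_eq_abs, abs_of_pos hpa]
    exact ⟨hpa, by linarith⟩
  obtain ⟨φ₀⟩ := (inferInstance : Nonempty (K →+* ℂ))
  have σ₀ : K →ₐ[ℚ] ℂ := RingHom.equivRatAlgHom K ℂ φ₀
  have _ : Nonempty (K →ₐ[ℚ] ℂ) := ⟨σ₀⟩
  have hprod : ∏ σ : K →ₐ[ℚ] ℂ, ‖σ (algebraMap (𝓞 K) K a)‖ < 1 := by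
    calc ∏ σ : K →ₐ[ℚ] ℂ, ‖σ (algebraMap (𝓞 K) K a)‖
        < ∏ _σ : K →ₐ[ℚ] ℂ, (1 : ℝ) := by
          apply Finset.prod_lt_prod_of_nonempty
          · exact fun σ _ => (key σ).1
          · exact fun σ _ => (key σ).2
          · exact Finset.univ_nonempty
      _ = 1 := by simp
  have hnorm := Algebra.norm_eq_prod_embeddings ℚ ℂ (algebraMap (𝓞 K) K a)
  have habs : ‖algebraMap ℚ ℂ (Algebra.norm ℚ (algebraMap (𝓞 K) K a))‖
      = ∏ σ : K →ₐ[ℚ] ℂ, ‖σ (algebraMap (𝓞 K) K a)‖ := by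
    rw [hnorm, norm_prod]
  have hint : Algebra.norm ℚ (algebraMap (𝓞 K) K a) = ((Algebra.norm ℤ a : ℤ) : ℚ) :=
    (Algebra.coe_norm_int a).symm
  have ha0 : a ≠ 0 := by
    intro h
    have := ha (mkRealEmb σ₀.toRingHom (htR σ₀.toRingHom))
    rw [h, map_zero, map_zero] at this
    exact lt_irrefl _ this
  have hN : Algebra.norm ℤ a ≠ 0 := by
    rw [Algebra.norm_ne_zero_iff]
    exact ha0
  have h1le : (1 : ℝ) ≤ ‖algebraMap ℚ ℂ (Algebra.norm ℚ (algebraMap (𝓞 K) K a))‖ := by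
    rw [hint]
    have : (1 : ℤ) ≤ |Algebra.norm ℤ a| := Int.one_le_abs hN
    calc (1:ℝ) ≤ |(Algebra.norm ℤ a : ℝ)| := by exact_mod_cast this
      _ = ‖algebraMap ℚ ℂ ((Algebra.norm ℤ a : ℤ) : ℚ)‖ := by
          rw [map_intCast (algebraMap ℚ ℂ), Complex.norm_intCast]
  rw [habs] at h1le
  linarith

/-- If `X² + XY + Y² = 0` over ℝ then `X = Y = 0`. -/
lemma real_quad_zero {X Y : ℝ} (h : X ^ 2 + X * Y + Y ^ 2 = 0) : X = 0 ∧ Y = 0 := by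
  have hX2 : X ^ 2 = 0 :=
    le_antisymm (by nlinarith [sq_nonneg (X + Y), sq_nonneg Y]) (sq_nonneg X)
  have hY2 : Y ^ 2 = 0 :=
    le_antisymm (by nlinarith [sq_nonneg (X + Y), sq_nonneg X]) (sq_nonneg Y)
  constructor
  · exact (pow_eq_zero_iff two_ne_zero).1 hX2
  · exact (pow_eq_zero_iff two_ne_zero).1 hY2

/-- If a semidefinite binary form has first coefficient 0, its middle coefficient is 0. -/
lemma semidef_b_zero [Field K] [NumberField K] (ψ : K →+* ℝ) {a b c : 𝓞 K}
    (hQ : BinSemiDef a b c) (ha : a = 0) : b = 0 := by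
  have h' : ∀ n : ℤ, 0 ≤ ψ (algebraMap (𝓞 K) K b) * (n : ℝ) + ψ (algebraMap (𝓞 K) K c) := by
    intro n
    have h1 : TNonneg (b * (n : 𝓞 K) + c) := by
      have := hQ (n : 𝓞 K) 1
      simpa [ha] using this
    have h2 := tnonneg_nonneg ψ h1
    rw [map_add, map_mul, map_add, map_mul, map_intCast, map_intCast] at h2
    exact h2
  set r := ψ (algebraMap (𝓞 K) K b) with hr
  set s := ψ (algebraMap (𝓞 K) K c) with hs
  have hr0 : r = 0 := by
    by_contra hrn
    obtain ⟨m, hm⟩ := exists_nat_gt (s / |r|)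
    have hrm : s < (m : ℝ) * |r| := (div_lt_iff₀ (abs_pos.2 hrn)).1 hm
    rcases lt_or_gt_of_ne hrn with hneg | hpos
    · have := h' (m : ℤ)
      rw [abs_of_neg hneg] at hrm
      push_cast at this
      nlinarith
    · have := h' (-(m : ℤ))
      rw [abs_of_pos hpos] at hrm
      push_cast at this
      nlinarith
  exact elt_eq_zero_of_emb ψ hr0

lemma keyCase [Field K] [NumberField K]
    (htR : ∀ φ : K →+* ℂ, ∀ x : K, (φ x).im = 0) (ψ : K →+* ℝ)
    {a₁ b₁ c₁ a₂ b₂ c₂ : 𝓞 K}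
    (h₁ : BinSemiDef a₁ b₁ c₁) (h₂ : BinSemiDef a₂ b₂ c₂)
    (hn₁ : ¬(a₁ = 0 ∧ b₁ = 0 ∧ c₁ = 0))
    (ha : (1 : 𝓞 K) = a₁ + a₂) (hb : (1 : 𝓞 K) = b₁ + b₂) (hc : (1 : 𝓞 K) = c₁ + c₂)
    (ha₁ : a₁ = 0) : False := by
  have hb₁ : b₁ = 0 := semidef_b_zero ψ h₁ ha₁
  have hc₁ne : c₁ ≠ 0 := by
    intro h
    exact hn₁ ⟨ha₁, hb₁, h⟩
  have hc₁nn : TNonneg c₁ := by simpa using h₁ 0 1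
  have hc₁pos : TPos c₁ := hc₁nn.resolve_right hc₁ne
  have hc₂nn : TNonneg c₂ := by simpa using h₂ 0 1
  rcases hc₂nn with hc₂pos | hc₂z
  · exact one_indec htR hc₁pos hc₂pos hc.symm
  · have ha₂ : a₂ = 1 := by rw [ha₁, zero_add] at ha; exact ha.symm
    have hb₂ : b₂ = 1 := by rw [hb₁, zero_add] at hb; exact hb.symm
    have hneg : TNonneg (-1 : 𝓞 K) := by
      have := h₂ 1 (-2)
      have e : a₂ * (1 : 𝓞 K) ^ 2 + b₂ * 1 * (-2) + c₂ * (-2) ^ 2 = -1 := by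
        rw [ha₂, hb₂, hc₂z]; ring
      rwa [e] at this
    rcases hneg with hp | hz
    · have := hp ψ
      rw [map_neg, map_one, map_neg, map_one] at this
      linarith
    · rw [neg_eq_zero] at hz
      exact one_ne_zero hz

theorem stmt1 [Field K] [NumberField K]
    (htotallyReal : ∀ φ : K →+* ℂ, ∀ x : K, (φ x).im = 0) :
    BinPosDef (1 : 𝓞 K) 1 1 ∧ BinIndec (1 : 𝓞 K) 1 1 := by
  obtain ⟨φ₀⟩ := (inferInstance : Nonempty (K →+* ℂ))
  have ψ : K →+* ℝ := mkRealEmb φ₀ (htotallyReal φ₀)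
  have hsemi : BinSemiDef (1 : 𝓞 K) 1 1 := by
    intro x y
    by_cases h0 : (1 : 𝓞 K) * x ^ 2 + 1 * x * y + 1 * y ^ 2 = 0
    · exact Or.inr h0
    · left
      intro φ
      set X := φ (algebraMap (𝓞 K) K x) with hX
      set Y := φ (algebraMap (𝓞 K) K y) with hY
      have hmap : φ (algebraMap (𝓞 K) K ((1 : 𝓞 K) * x ^ 2 + 1 * x * y + 1 * y ^ 2))
          = X ^ 2 + X * Y + Y ^ 2 := by
        simp only [map_add, map_mul, map_pow, map_one, one_mul]
        rfl
      rw [hmap]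
      have hnn : 0 ≤ X ^ 2 + X * Y + Y ^ 2 := by nlinarith [sq_nonneg (X + Y), sq_nonneg X, sq_nonneg Y]
      rcases hnn.lt_or_eq with h | h
      · exact h
      · exfalso
        obtain ⟨hX0, hY0⟩ := real_quad_zero h.symm
        have hx0 : x = 0 := elt_eq_zero_of_emb φ hX0
        have hy0 : y = 0 := elt_eq_zero_of_emb φ hY0
        apply h0
        rw [hx0, hy0]; ring
  refine ⟨⟨hsemi, ?_⟩, ?_⟩
  · intro x y heq
    have hmap : ψ (algebraMap (𝓞 K) K ((1 : 𝓞 K) * x ^ 2 + 1 * x * y + 1 * y ^ 2)) = 0 := by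
      rw [heq, map_zero, map_zero]
    simp only [map_add, map_mul, map_pow, map_one, one_mul] at hmap
    obtain ⟨hX0, hY0⟩ := real_quad_zero hmap
    exact ⟨elt_eq_zero_of_emb ψ hX0, elt_eq_zero_of_emb ψ hY0⟩
  · rintro ⟨a₁, b₁, c₁, a₂, b₂, c₂, h₁, h₂, hn₁, hn₂, ha, hb, hc⟩
    have hA₁ : TNonneg a₁ := by simpa using h₁ 1 0
    have hA₂ : TNonneg a₂ := by simpa using h₂ 1 0
    rcases hA₁ with hp₁ | hz₁
    · rcases hA₂ with hp₂ | hz₂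
      · exact one_indec htotallyReal hp₁ hp₂ ha.symm
      · exact keyCase htotallyReal ψ h₂ h₁ hn₂ (by rw [ha, add_comm]) (by rw [hb, add_comm])
          (by rw [hc, add_comm]) hz₂
    · exact keyCase htotallyReal ψ h₁ h₂ hn₁ ha hb hc hz₁
end

section
/- In any real biquadratic field K = Q(√p,√q), the only decompositions of 2 as a sum of two elements of O_K⁺ ∪ {0} are 2 = 0 + 2 and 2 = 1 + 1. -/
open NumberField

variable {K : Type*}

/-- Turn a complex embedding with all-real values into a real embedding. -/
def realify [Field K] (φ : K →+* ℂ) (h : ∀ x, (φ x).im = 0) : K →+* ℝ where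
  toFun x := (φ x).re
  map_one' := by simp
  map_mul' x y := by
    show (φ (x * y)).re = (φ x).re * (φ y).re
    rw [map_mul, Complex.mul_re, h, h]; ring
  map_zero' := by simp
  map_add' x y := by
    show (φ (x + y)).re = (φ x).re + (φ y).re
    rw [map_add, Complex.add_re]

lemma realify_eq [Field K] (φ : K →+* ℂ) (h : ∀ x, (φ x).im = 0) (x : K) :
    φ x = ((realify φ h x : ℝ) : ℂ) := by
  apply Complex.ext
  · simp [realify]
  · simp [realify, h x]

lemma allreal [Field K] [NumberField K]
    (p q : ℕ) (hp : 1 < p) (hq : 1 < q)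
    (sp sq : K) (hsp : sp ^ 2 = (p : K)) (hsq : sq ^ 2 = (q : K))
    (hgen : Algebra.adjoin ℚ {sp, sq} = ⊤)
    (φ : K →+* ℂ) : ∀ x : K, (φ x).im = 0 := by
  let A : Subalgebra ℚ K :=
  { carrier := {x | (φ x).im = 0}
    mul_mem' := by
      intro a b ha hb
      simp only [Set.mem_setOf_eq] at ha hb ⊢
      rw [map_mul, Complex.mul_im, ha, hb]; ring
    add_mem' := by
      intro a b ha hb
      simp only [Set.mem_setOf_eq] at ha hb ⊢
      rw [map_add, Complex.add_im, ha, hb]; ring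
    one_mem' := by simp
    zero_mem' := by simp
    algebraMap_mem' := by
      intro r
      have : φ (algebraMap ℚ K r) = (r : ℂ) := by
        rw [show algebraMap ℚ K r = (r : K) from rfl, map_ratCast]
      simp [Set.mem_setOf_eq, this] }
  have key : ∀ (s : K) (n : ℕ), 0 < n → s ^ 2 = (n : K) → (φ s).im = 0 := by
    intro s n hn hs2
    have h2 : (φ s) ^ 2 = (n : ℂ) := by
      rw [← map_pow, hs2, map_natCast]
    have him : ((φ s) ^ 2).im = 0 := by rw [h2]; simp
    have hre : ((φ s) ^ 2).re = (n : ℝ) := by rw [h2]; simp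
    rw [pow_two, Complex.mul_im] at him
    rw [pow_two, Complex.mul_re] at hre
    by_contra himne
    have hre0 : (φ s).re = 0 := by
      rcases mul_eq_zero.mp (by linarith : (φ s).re * (φ s).im = 0) with h | h
      · exact h
      · exact absurd h himne
    rw [hre0] at hre
    have : (0:ℝ) < n := by exact_mod_cast hn
    nlinarith [sq_nonneg (φ s).im]
  have hsp' : sp ∈ A := key sp p (by omega) hsp
  have hsq' : sq ∈ A := key sq q (by omega) hsq
  have : A = ⊤ := top_le_iff.mp (hgen ▸ Algebra.adjoin_le (by
    intro x hx
    rcases hx with h | h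
    · exact h ▸ hsp'
    · exact h ▸ hsq'))
  intro x
  have : x ∈ A := this ▸ Algebra.mem_top
  exact this

/-- Main lemma: an algebraic integer all of whose real-embedding images lie within
distance < 1 of 1 must be 1, in a totally real field. -/
lemma eq_one_of_close [Field K] [NumberField K]
    (p q : ℕ) (hp : 1 < p) (hq : 1 < q)
    (sp sq : K) (hsp : sp ^ 2 = (p : K)) (hsq : sq ^ 2 = (q : K))
    (hgen : Algebra.adjoin ℚ {sp, sq} = ⊤)
    (α : 𝓞 K) (h : ∀ ψ : K →+* ℝ, |ψ (algebraMap (𝓞 K) K α) - 1| < 1) : α = 1 := by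
  set x : K := algebraMap (𝓞 K) K α - 1 with hx
  have hxint : x = algebraMap (𝓞 K) K (α - 1) := by
    push_cast [hx]; ring
  have habs : ∀ φ : K →ₐ[ℚ] ℂ, ‖φ x‖ < 1 := by
    intro φ
    have hreal := allreal p q hp hq sp sq hsp hsq hgen φ.toRingHom
    have := realify_eq φ.toRingHom hreal x
    rw [show (φ x) = φ.toRingHom x from rfl, this, Complex.norm_real, Real.norm_eq_abs]
    have hψ := h (realify φ.toRingHom hreal)
    have : realify φ.toRingHom hreal x
        = realify φ.toRingHom hreal (algebraMap (𝓞 K) K α) - 1 := by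
      rw [hx, map_sub, map_one]
    rw [this]
    exact hψ
  have hprod : ‖algebraMap ℚ ℂ (Algebra.norm ℚ x)‖ < 1 := by
    rw [Algebra.norm_eq_prod_embeddings ℚ ℂ x, norm_prod]
    have hne : (Finset.univ : Finset (K →ₐ[ℚ] ℂ)).Nonempty := by
      have : 0 < Fintype.card (K →ₐ[ℚ] ℂ) := by
        rw [AlgHom.card ℚ K ℂ]
        exact Module.finrank_pos
      exact Finset.univ_nonempty_iff.mpr (Fintype.card_pos_iff.mp this)
    by_cases hz : ∃ φ : K →ₐ[ℚ] ℂ, ‖φ x‖ = 0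
    · obtain ⟨φ, hφ⟩ := hz
      rw [Finset.prod_eq_zero (Finset.mem_univ φ) hφ]
      norm_num
    · push_neg at hz
      calc ∏ φ : K →ₐ[ℚ] ℂ, ‖φ x‖
          < ∏ _φ : K →ₐ[ℚ] ℂ, (1:ℝ) := by
            apply Finset.prod_lt_prod_of_nonempty
            · intro φ _
              exact lt_of_le_of_ne (norm_nonneg _) (Ne.symm (hz φ))
            · intro φ _; exact habs φ
            · exact hne
        _ = 1 := Finset.prod_const_one
  have hnormQ : |Algebra.norm ℚ x| < 1 := by
    rw [show algebraMap ℚ ℂ (Algebra.norm ℚ x) = (((Algebra.norm ℚ x : ℚ) : ℝ) : ℂ) by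
      push_cast; rfl, Complex.norm_real, Real.norm_eq_abs] at hprod
    exact_mod_cast hprod
  have hint : Algebra.norm ℚ x = ((Algebra.norm ℤ (α - 1) : ℤ) : ℚ) := by
    rw [hxint]; exact (Algebra.coe_norm_int (α - 1)).symm
  rw [hint] at hnormQ
  have : |Algebra.norm ℤ (α - 1)| < 1 := by exact_mod_cast hnormQ
  have hz : Algebra.norm ℤ (α - 1) = 0 := Int.abs_lt_one_iff.mp this
  have : Algebra.norm ℚ x = 0 := by rw [hint, hz]; norm_num
  have hx0 : x = 0 := (Algebra.norm_eq_zero_iff).mp this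
  have : algebraMap (𝓞 K) K (α - 1) = 0 := by rw [← hxint]; exact hx0
  have : α - 1 = 0 := by
    exact_mod_cast (map_eq_zero_iff _ (RingOfIntegers.coe_injective)).mp this
  linear_combination this

theorem stmt4 [Field K] [NumberField K]
    (p q : ℕ) (hp : 1 < p) (hq : 1 < q) (hpq : p ≠ q)
    (hps : Squarefree p) (hqs : Squarefree q)
    (sp sq : K) (hsp : sp ^ 2 = (p : K)) (hsq : sq ^ 2 = (q : K))
    (hgen : Algebra.adjoin ℚ {sp, sq} = ⊤)
    (α β : 𝓞 K) (hα : TNonneg α) (hβ : TNonneg β) (hsum : α + β = 2) :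
    (α = 0 ∧ β = 2) ∨ (α = 2 ∧ β = 0) ∨ (α = 1 ∧ β = 1) := by
  rcases hα with hαp | hα0
  · rcases hβ with hβp | hβ0
    · right; right
      have h1 : ∀ ψ : K →+* ℝ, |ψ (algebraMap (𝓞 K) K α) - 1| < 1 := by
        intro ψ
        have ha := hαp ψ
        have hb := hβp ψ
        have hs : ψ (algebraMap (𝓞 K) K α) + ψ (algebraMap (𝓞 K) K β) = 2 := by
          rw [← map_add, ← map_add, hsum, map_ofNat, map_ofNat]
        rw [abs_lt]
        constructor <;> linarith
      have hα1 := eq_one_of_close p q hp hq sp sq hsp hsq hgen α h1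
      exact ⟨hα1, by linear_combination hsum - hα1⟩
    · right; left
      subst hβ0
      exact ⟨by linear_combination hsum, rfl⟩
  · left
    subst hα0
    exact ⟨rfl, by linear_combination hsum⟩
end

section
/- In any real biquadratic field K = Q(√p,√q), the only decompositions of 3 as a sum of two elements of O_K⁺ ∪ {0} are 3 = 0 + 3, 3 = 1 + 2, and (when √5 ∈ K) 3 = (3+√5)/2 + (3−√5)/2. -/
open NumberField

variable {K : Type*}

section Aux

lemma real_of_sq_natCast {z : ℂ} {n : ℕ} (h : z ^ 2 = (n : ℂ)) : ∃ r : ℝ, (r : ℂ) = z := by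
  have h2 : z * z = (n : ℂ) := by rw [← sq]; exact h
  have him : z.re * z.im + z.im * z.re = 0 := by
    have := congrArg Complex.im h2
    simpa [Complex.mul_im] using this
  have hre : z.re * z.re - z.im * z.im = (n : ℝ) := by
    have := congrArg Complex.re h2
    simpa [Complex.mul_re] using this
  by_cases hzim : z.im = 0
  · exact ⟨z.re, Complex.ext (by simp) (by simp [hzim])⟩
  · have hzre : z.re = 0 := by
      rcases mul_eq_zero.mp (by linarith [him] : z.re * z.im = 0) with h | h
      · exact h
      · exact absurd h hzim
    have hn0 : (0:ℝ) ≤ (n : ℝ) := by positivity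
    have him2 : 0 < z.im * z.im := mul_self_pos.mpr hzim
    nlinarith

variable {K : Type*} [Field K] [NumberField K]

lemma allReal (sp sq : K) {p q : ℕ} (hsp : sp ^ 2 = (p : K)) (hsq : sq ^ 2 = (q : K))
    (hgen : Algebra.adjoin ℚ {sp, sq} = ⊤) (φ : K →+* ℂ) (x : K) :
    ∃ r : ℝ, (r : ℂ) = φ x := by
  have hx : x ∈ Algebra.adjoin ℚ ({sp, sq} : Set K) := by rw [hgen]; trivial
  induction hx using Algebra.adjoin_induction with
  | mem y hy =>
      rcases hy with h | h
      · subst h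
        refine real_of_sq_natCast (n := p) ?_
        rw [← map_pow, hsp, map_natCast]
      · rw [Set.mem_singleton_iff] at h; subst h
        refine real_of_sq_natCast (n := q) ?_
        rw [← map_pow, hsq, map_natCast]
  | algebraMap r =>
      refine ⟨(r : ℝ), ?_⟩
      rw [eq_ratCast (algebraMap ℚ K) r, map_ratCast]
      push_cast
      rfl
  | add x y hx hy ihx ihy =>
      obtain ⟨r, hr⟩ := ihx; obtain ⟨s, hs⟩ := ihy
      exact ⟨r + s, by rw [map_add, ← hr, ← hs]; push_cast; ring⟩
  | mul x y hx hy ihx ihy =>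
      obtain ⟨r, hr⟩ := ihx; obtain ⟨s, hs⟩ := ihy
      exact ⟨r * s, by rw [map_mul, ← hr, ← hs]; push_cast; ring⟩

/-- turn a real-valued complex embedding into a real embedding -/
noncomputable def realEmbed (φ : K →+* ℂ) (h : ∀ x, ∃ r : ℝ, (r : ℂ) = φ x) : K →+* ℝ where
  toFun x := (φ x).re
  map_one' := by simp
  map_zero' := by simp
  map_add' x y := by simp [map_add]
  map_mul' x y := by
    have hx : (φ x).im = 0 := by obtain ⟨r, hr⟩ := h x; rw [← hr]; simp
    have hy : (φ y).im = 0 := by obtain ⟨r, hr⟩ := h y; rw [← hr]; simp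
    simp [map_mul, Complex.mul_re, hx, hy]

lemma realEmbed_spec (φ : K →+* ℂ) (h : ∀ x, ∃ r : ℝ, (r : ℂ) = φ x) (x : K) :
    ((realEmbed φ h x : ℝ) : ℂ) = φ x := by
  have hx : (φ x).im = 0 := by obtain ⟨r, hr⟩ := h x; rw [← hr]; simp
  exact Complex.ext (by simp [realEmbed]) (by simp [realEmbed, hx])

end Aux

theorem stmt5 [Field K] [NumberField K]
    (p q : ℕ) (hp : 1 < p) (hq : 1 < q) (hpq : p ≠ q)
    (hps : Squarefree p) (hqs : Squarefree q)
    (sp sq : K) (hsp : sp ^ 2 = (p : K)) (hsq : sq ^ 2 = (q : K))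
    (hgen : Algebra.adjoin ℚ {sp, sq} = ⊤)
    (α β : 𝓞 K) (hα : TNonneg α) (hβ : TNonneg β) (hsum : α + β = 3) :
    (α = 0 ∧ β = 3) ∨ (α = 3 ∧ β = 0) ∨ (α = 1 ∧ β = 2) ∨ (α = 2 ∧ β = 1) ∨
      (∃ s : K, s ^ 2 = 5 ∧ algebraMap (𝓞 K) K α = (3 + s) / 2 ∧
        algebraMap (𝓞 K) K β = (3 - s) / 2) := by
  classical
  have hβα : β = 3 - α := eq_sub_of_add_eq' hsum
  set A : K := algebraMap (𝓞 K) K α with hA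
  have hsumK : A + algebraMap (𝓞 K) K β = 3 := by
    rw [hA, ← map_add, hsum]; exact map_ofNat _ 3
  have hAB : ∀ ψ : K →+* ℝ, 0 ≤ ψ A ∧ ψ A ≤ 3 := by
    intro ψ
    have hb : ψ A + ψ (algebraMap (𝓞 K) K β) = 3 := by
      rw [← map_add, hsumK]; exact map_ofNat _ 3
    constructor
    · rcases hα with h | h
      · exact (h ψ).le
      · simp [hA, h]
    · rcases hβ with h | h
      · have := h ψ; linarith
      · have h0 : algebraMap (𝓞 K) K β = 0 := by rw [h]; simp
        rw [h0, map_zero] at hb; linarith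
  by_cases hδ : α * (α - 1) * (α - 2) * (α - 3) = 0
  · rcases mul_eq_zero.mp hδ with h | h
    · rcases mul_eq_zero.mp h with h' | h'
      · rcases mul_eq_zero.mp h' with h'' | h''
        · exact Or.inl ⟨h'', by rw [hβα, h'']; norm_num⟩
        · have hα1 : α = 1 := by linear_combination h''
          exact Or.inr (Or.inr (Or.inl ⟨hα1, by rw [hβα, hα1]; norm_num⟩))
      · have hα2 : α = 2 := by linear_combination h'
        exact Or.inr (Or.inr (Or.inr (Or.inl ⟨hα2, by rw [hβα, hα2]; norm_num⟩)))
    · have hα3 : α = 3 := by linear_combination h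
      exact Or.inr (Or.inl ⟨hα3, by rw [hβα, hα3]; norm_num⟩)
  · set d : 𝓞 K := α * (α - 1) * (α - 2) * (α - 3) with hd
    set δ : K := algebraMap (𝓞 K) K d with hδdef
    have hδ0 : δ ≠ 0 := by
      rw [hδdef]
      exact (map_ne_zero_iff _ RingOfIntegers.coe_injective).mpr hδ
    have hdK : δ = A * (A - 1) * (A - 2) * (A - 3) := by
      rw [hδdef, hd]
      simp only [map_mul, map_sub, map_one, map_ofNat, hA]
    have hδint : IsIntegral ℤ δ := RingOfIntegers.isIntegral_coe d
    have hNint : IsIntegral ℤ (Algebra.norm ℚ δ) := Algebra.isIntegral_norm ℚ hδint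
    obtain ⟨n, hn⟩ := IsIntegrallyClosed.isIntegral_iff.mp hNint
    have hnorm0 : Algebra.norm ℚ δ ≠ 0 := Algebra.norm_ne_zero_iff.mpr hδ0
    have hn0 : n ≠ 0 := by rintro rfl; rw [map_zero] at hn; exact hnorm0 hn.symm
    have h1n : (1 : ℝ) ≤ |(n : ℝ)| := by exact_mod_cast Int.one_le_abs hn0
    have hprod : ((n : ℂ)) = ∏ σ : K →ₐ[ℚ] ℂ, σ δ := by
      rw [← Algebra.norm_eq_prod_embeddings ℚ ℂ δ, ← hn]
      simp
    have habs : |(n : ℝ)| = ∏ σ : K →ₐ[ℚ] ℂ, ‖σ δ‖ := by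
      have h3 := congrArg (‖·‖) hprod
      rw [norm_prod] at h3
      simpa using h3
    have hγ : A ^ 2 - 3 * A + 1 = 0 := by
      by_contra hne
      have key : ∀ σ : K →ₐ[ℚ] ℂ, ‖σ δ‖ < 1 := by
        intro σ
        have hreal := allReal sp sq hsp hsq hgen σ.toRingHom
        set ψ := realEmbed σ.toRingHom hreal with hψdef
        have hspec := realEmbed_spec σ.toRingHom hreal
        set x := ψ A with hx
        obtain ⟨hx0, hx3⟩ := hAB ψ
        have hvx : ψ (A ^ 2 - 3 * A + 1) = x ^ 2 - 3 * x + 1 := by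
          rw [map_add, map_sub, map_pow, map_mul, map_one, map_ofNat]
        have hvne : x ^ 2 - 3 * x + 1 ≠ 0 := by
          intro h0
          exact hne (ψ.injective (by rw [hvx, h0, map_zero]))
        have hδval : ψ δ = x * (x - 1) * (x - 2) * (x - 3) := by
          rw [hdK]
          simp only [map_mul, map_sub, map_one, map_ofNat]
          rfl
        have hσδ : σ δ = ((ψ δ : ℝ) : ℂ) := (hspec δ).symm
        rw [hσδ, Complex.norm_real, Real.norm_eq_abs, hδval, abs_lt]
        have hv2 : 0 < (x ^ 2 - 3 * x + 1) ^ 2 :=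
          lt_of_le_of_ne (sq_nonneg _) (Ne.symm (pow_ne_zero 2 hvne))
        constructor
        · nlinarith [hv2]
        · nlinarith [mul_nonneg hx0 (by linarith : (0:ℝ) ≤ 3 - x), sq_nonneg (2 * x - 3)]
      obtain ⟨σ0⟩ : Nonempty (K →ₐ[ℚ] ℂ) := ⟨(Classical.arbitrary (K →+* ℂ)).toRatAlgHom⟩
      have hlt : ∏ σ : K →ₐ[ℚ] ℂ, ‖σ δ‖ < 1 := by
        calc ∏ σ : K →ₐ[ℚ] ℂ, ‖σ δ‖
            = ‖σ0 δ‖ * ∏ σ ∈ Finset.univ.erase σ0, ‖σ δ‖ :=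
              (Finset.mul_prod_erase _ _ (Finset.mem_univ σ0)).symm
          _ ≤ ‖σ0 δ‖ * 1 := by
              refine mul_le_mul_of_nonneg_left ?_ (norm_nonneg _)
              exact Finset.prod_le_one (fun σ _ => norm_nonneg _) (fun σ _ => (key σ).le)
          _ < 1 := by rw [mul_one]; exact key σ0
      rw [habs] at h1n
      linarith
    refine Or.inr (Or.inr (Or.inr (Or.inr ⟨2 * A - 3, ?_, ?_, ?_⟩)))
    · linear_combination 4 * hγ
    · field_simp
      ring
    · have hB : algebraMap (𝓞 K) K β = 3 - A := by linear_combination hsumK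
      rw [hB]; field_simp; ring
end

section
/- Let p ≡ 3 (mod 4) and let K = Q(√p,√q) be a real biquadratic field of integral basis type (1) or (3). Then the binary quadratic form Q(x,y) = 2x² + 2√p·xy + ((p+1)/2)y², of determinant 1, is additively indecomposable over O_K. -/
open NumberField

variable {K : Type*}

lemma im_zero_of_sq_nat {z : ℂ} {n : ℕ} (hn : 0 < n) (h : z ^ 2 = (n : ℂ)) : z.im = 0 := by
  have him : (z ^ 2).im = 0 := by rw [h]; simp
  have hre : (z ^ 2).re = (n : ℝ) := by rw [h]; simp
  rw [sq] at him hre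
  simp only [Complex.mul_im, Complex.mul_re] at him hre
  have hn' : (0:ℝ) < (n:ℝ) := by exact_mod_cast hn
  by_contra h0
  have hre0 : z.re = 0 := by
    rcases mul_eq_zero.mp (by linarith : z.re * z.im = 0) with h | h
    · exact h
    · exact absurd h h0
  rw [hre0] at hre
  nlinarith [sq_nonneg z.im]

lemma emb_real [Field K] [CharZero K] {p q : ℕ} (hp : 0 < p) (hq : 0 < q)
    {sp sq : K} (hsp : sp ^ 2 = (p : K)) (hsq : sq ^ 2 = (q : K))
    (hgen : Algebra.adjoin ℚ {sp, sq} = ⊤) (σ : K →+* ℂ) :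
    ∃ φ : K →+* ℝ, ∀ x, σ x = ((φ x : ℝ) : ℂ) := by
  have hS : ∀ x : K, (σ x).im = 0 := by
    let S : Subalgebra ℚ K :=
      { carrier := {x | (σ x).im = 0}
        mul_mem' := by
          intro x y hx hy
          simp only [Set.mem_setOf_eq, map_mul, Complex.mul_im] at *
          rw [hx, hy]; ring
        one_mem' := by simp [Set.mem_setOf_eq]
        add_mem' := by
          intro x y hx hy
          simp only [Set.mem_setOf_eq, map_add, Complex.add_im] at *
          rw [hx, hy]; ring
        zero_mem' := by simp [Set.mem_setOf_eq]
        algebraMap_mem' := by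
          intro r
          show (σ (algebraMap ℚ K r)).im = 0
          rw [eq_ratCast (algebraMap ℚ K) r, map_ratCast]
          simp }
    have hsub : Algebra.adjoin ℚ {sp, sq} ≤ S := by
      apply Algebra.adjoin_le
      rintro x hx
      rcases Set.mem_insert_iff.mp hx with rfl | hx
      · exact im_zero_of_sq_nat hp (by rw [← map_pow, hsp, map_natCast])
      · rcases Set.mem_singleton_iff.mp hx with rfl
        exact im_zero_of_sq_nat hq (by rw [← map_pow, hsq, map_natCast])
    rw [hgen] at hsub
    exact fun x => hsub (by trivial)
  refine ⟨{ toFun := fun x => (σ x).re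
            map_one' := by simp
            map_mul' := fun x y => by
              simp only [map_mul, Complex.mul_re, hS x, hS y, mul_zero, sub_zero]
            map_zero' := by simp
            map_add' := fun x y => by simp [map_add] }, fun x => ?_⟩
  apply Complex.ext
  · simp
  · simp [hS x]

lemma tiny_zero [Field K] [NumberField K]
    (hreal : ∀ σ : K →+* ℂ, ∃ φ : K →+* ℝ, ∀ x, σ x = ((φ x : ℝ) : ℂ))
    {x : 𝓞 K} (h : ∀ φ : K →+* ℝ, 0 ≤ φ (algebraMap (𝓞 K) K x) ∧ φ (algebraMap (𝓞 K) K x) < 1) :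
    x = 0 := by
  set xK := algebraMap (𝓞 K) K x with hxK
  have hint : IsIntegral ℤ (Algebra.norm ℚ xK) :=
    Algebra.isIntegral_norm ℚ (x.isIntegral_coe)
  obtain ⟨n, hn⟩ := IsIntegrallyClosed.isIntegral_iff.mp hint
  choose φf hφf using fun σ : K →ₐ[ℚ] ℂ => hreal (σ : K →+* ℂ)
  have hprod : algebraMap ℚ ℂ (Algebra.norm ℚ xK)
      = ((∏ σ : K →ₐ[ℚ] ℂ, φf σ xK : ℝ) : ℂ) := by
    rw [Algebra.norm_eq_prod_embeddings, Complex.ofReal_prod]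
    exact Finset.prod_congr rfl fun σ _ => hφf σ xK
  set P : ℝ := ∏ σ : K →ₐ[ℚ] ℂ, φf σ xK with hP
  have hP0 : 0 ≤ P := Finset.prod_nonneg fun σ _ => (h (φf σ)).1
  classical
  have hP1 : P < 1 := by
    obtain ⟨σ'⟩ : Nonempty (K →+* ℂ) := inferInstance
    have hne : Nonempty (K →ₐ[ℚ] ℂ) := ⟨σ'.toRatAlgHom⟩
    obtain ⟨σ₀⟩ := hne
    rw [hP, ← Finset.mul_prod_erase Finset.univ (fun σ => φf σ xK) (Finset.mem_univ σ₀)]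
    have h1 : ∏ σ ∈ Finset.univ.erase σ₀, φf σ xK ≤ 1 :=
      Finset.prod_le_one (fun σ _ => (h (φf σ)).1) (fun σ _ => (h (φf σ)).2.le)
    have h2 : 0 ≤ ∏ σ ∈ Finset.univ.erase σ₀, φf σ xK :=
      Finset.prod_nonneg fun σ _ => (h (φf σ)).1
    nlinarith [(h (φf σ₀)).1, (h (φf σ₀)).2]
  have hnP : (n : ℝ) = P := by
    have hc : ((n : ℝ) : ℂ) = (P : ℂ) := by
      rw [← hprod, ← hn, eq_intCast (algebraMap ℤ ℚ) n, map_intCast]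
      push_cast
      ring
    exact_mod_cast hc
  have hn0 : n = 0 := by
    have h0 : (0:ℝ) ≤ (n:ℝ) := hnP ▸ hP0
    have h1 : (n:ℝ) < 1 := hnP ▸ hP1
    have h0' : (0:ℤ) ≤ n := by exact_mod_cast h0
    have h1' : n < 1 := by exact_mod_cast h1
    omega
  have hnorm0 : Algebra.norm ℚ xK = 0 := by
    rw [← hn, hn0]; simp
  have hx0 : xK = 0 := by
    rwa [Algebra.norm_eq_zero_iff] at hnorm0
  exact RingOfIntegers.coe_eq_zero_iff.mp hx0

lemma zero_or_one [Field K] [NumberField K]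
    (hreal : ∀ σ : K →+* ℂ, ∃ φ : K →+* ℝ, ∀ x, σ x = ((φ x : ℝ) : ℂ))
    {x : 𝓞 K} (h : ∀ φ : K →+* ℝ, 0 ≤ φ (algebraMap (𝓞 K) K x) ∧ φ (algebraMap (𝓞 K) K x) ≤ 1) :
    x = 0 ∨ x = 1 := by
  have h0 : x * (1 - x) = 0 := by
    apply tiny_zero hreal
    intro φ
    obtain ⟨h1, h2⟩ := h φ
    rw [map_mul, map_sub, map_one]
    set t := φ (algebraMap (𝓞 K) K x)
    rw [map_mul, map_sub, map_one]
    constructor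
    · nlinarith
    · nlinarith
  rcases mul_eq_zero.mp h0 with h | h
  · exact Or.inl h
  · exact Or.inr (by linear_combination -h)

lemma semidef_facts [Field K] [NumberField K] {a b c : 𝓞 K} (h : BinSemiDef a b c)
    (φ : K →+* ℝ) :
    0 ≤ φ (algebraMap (𝓞 K) K a) ∧ 0 ≤ φ (algebraMap (𝓞 K) K c) ∧
      (φ (algebraMap (𝓞 K) K b))^2
        ≤ 4 * φ (algebraMap (𝓞 K) K a) * φ (algebraMap (𝓞 K) K c) := by
  have H : ∀ x y : 𝓞 K, 0 ≤ φ (algebraMap (𝓞 K) K (a*x^2+b*x*y+c*y^2)) := by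
    intro x y
    rcases h x y with hp | h0
    · exact (hp φ).le
    · rw [h0]; simp
  set A := φ (algebraMap (𝓞 K) K a) with hA'
  set B := φ (algebraMap (𝓞 K) K b) with hB'
  set C := φ (algebraMap (𝓞 K) K c) with hC'
  have Hnm : ∀ n m : ℤ, 0 ≤ A * n^2 + B * (n*m) + C * m^2 := by
    intro n m
    have := H (n : 𝓞 K) (m : 𝓞 K)
    simpa [map_add, map_mul, map_pow, map_intCast, hA', hB', hC', mul_assoc] using this
  have hA : 0 ≤ A := by have := Hnm 1 0; push_cast at this; linarith
  have hC : 0 ≤ C := by have := Hnm 0 1; push_cast at this; linarith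
  refine ⟨hA, hC, ?_⟩
  have Hr : ∀ r : ℚ, 0 ≤ A * (r:ℝ)^2 + B * r + C := by
    intro r
    have hd : (0:ℝ) < (r.den : ℝ) := by exact_mod_cast r.pos
    have h1 := Hnm r.num (r.den : ℤ)
    have hr : (r : ℝ) = (r.num : ℝ) / (r.den : ℝ) := by
      rw [Rat.cast_def]
    have key : A * (r:ℝ)^2 + B * r + C
        = (A * (r.num:ℝ)^2 + B * ((r.num:ℝ)*(r.den:ℝ)) + C * (r.den:ℝ)^2) / (r.den:ℝ)^2 := by
      rw [hr]; field_simp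
    rw [key]
    apply div_nonneg _ (by positivity)
    push_cast at h1 ⊢
    linarith
  by_contra hlt
  push_neg at hlt
  rcases eq_or_lt_of_le hA with hA0 | hA0
  · have hB : B ≠ 0 := by
      intro h0
      rw [h0] at hlt
      nlinarith
    rcases lt_or_gt_of_ne hB with hBneg | hBpos
    · obtain ⟨r, hr⟩ := exists_rat_gt ((-C - 1) / B)
      have h2 := Hr r
      rw [← hA0] at h2
      have h3 : B * (r:ℝ) < -C - 1 := by
        rw [div_lt_iff_of_neg hBneg] at hr
        nlinarith
      nlinarith
    · obtain ⟨r, hr⟩ := exists_rat_lt ((-C - 1) / B)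
      have h2 := Hr r
      rw [← hA0] at h2
      have h3 : B * (r:ℝ) < -C - 1 := by
        rw [lt_div_iff₀ hBpos] at hr
        nlinarith
      nlinarith
  · set D := B^2 - 4*A*C with hD
    have hDpos : 0 < D := by rw [hD]; nlinarith
    set s := Real.sqrt D with hs
    have hs2 : s^2 = D := Real.sq_sqrt hDpos.le
    have hs0 : 0 < s := Real.sqrt_pos.mpr hDpos
    have h2A : (0:ℝ) < 2*A := by linarith
    obtain ⟨r, hr1, hr2⟩ := exists_rat_btwn
      (show (-B)/(2*A) < (-B + s)/(2*A) by
        rw [div_lt_div_iff₀ h2A h2A]; nlinarith)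
    rw [div_lt_iff₀ h2A] at hr1
    rw [lt_div_iff₀ h2A] at hr2
    have h1 : 0 < 2*A*(r:ℝ) + B := by linarith
    have h2 : 2*A*(r:ℝ) + B < s := by linarith
    have h3 : (2*A*(r:ℝ)+B)^2 < D := by
      nlinarith [mul_pos (sub_pos.mpr h2) (by linarith : (0:ℝ) < s + (2*A*(r:ℝ)+B))]
    nlinarith [Hr r, mul_nonneg hA0.le (Hr r)]

set_option maxHeartbeats 2000000 in
theorem stmt7 [Field K] [NumberField K]
    (p q : ℕ) (hp : 1 < p) (hq : 1 < q) (hpq : p ≠ q)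
    (hps : Squarefree p) (hqs : Squarefree q)
    (hp3 : p % 4 = 3) (hq12 : q % 4 = 1 ∨ q % 4 = 2)
    (sp sq : K) (hsp : sp ^ 2 = (p : K)) (hsq : sq ^ 2 = (q : K))
    (hgen : Algebra.adjoin ℚ {sp, sq} = ⊤)
    (a b c : 𝓞 K)
    (hac : algebraMap (𝓞 K) K a = 2)
    (hbc : algebraMap (𝓞 K) K b = 2 * sp)
    (hcc : algebraMap (𝓞 K) K c = ((p : K) + 1) / 2) :
    BinIndecCl a b c := by
  have hp0 : 0 < p := by omega
  have hq0 : 0 < q := by omega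
  have hpR : (1:ℝ) < (p:ℝ) := by exact_mod_cast hp
  have hreal : ∀ σ : K →+* ℂ, ∃ φ : K →+* ℝ, ∀ x, σ x = ((φ x : ℝ) : ℂ) :=
    fun σ => emb_real hp0 hq0 hsp hsq hgen σ
  obtain ⟨σ₀⟩ : Nonempty (K →+* ℂ) := inferInstance
  obtain ⟨φ₀, -⟩ := hreal σ₀
  rintro ⟨A1, B1, C1, A2, B2, C2, ⟨β₁, hB1⟩, ⟨β₂, hB2⟩, hsd₁, hsd₂, hne₁, hne₂, ha, hb, hc⟩
  have hfinj : Function.Injective (algebraMap (𝓞 K) K) := RingOfIntegers.coe_injective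
  have hzero_of_φ : ∀ x : 𝓞 K, φ₀ (algebraMap (𝓞 K) K x) = 0 → x = 0 := by
    intro x hx
    apply hfinj
    rw [map_zero]
    exact φ₀.injective (by rw [hx, map_zero])
  have D1 := fun φ : K →+* ℝ => semidef_facts hsd₁ φ
  have D2 := fun φ : K →+* ℝ => semidef_facts hsd₂ φ
  have hspφ : ∀ φ : K →+* ℝ, (φ sp)^2 = (p:ℝ) := fun φ => by
    rw [← map_pow, hsp, map_natCast]
  have haφ : ∀ φ : K →+* ℝ, φ (algebraMap (𝓞 K) K A1) + φ (algebraMap (𝓞 K) K A2) = 2 := by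
    intro φ
    rw [← map_add, ← map_add, ← ha, hac, map_ofNat]
  have hcφ : ∀ φ : K →+* ℝ, φ (algebraMap (𝓞 K) K C1) + φ (algebraMap (𝓞 K) K C2)
      = ((p:ℝ)+1)/2 := by
    intro φ
    rw [← map_add, ← map_add, ← hc, hcc, map_div₀, map_add, map_natCast, map_one, map_ofNat]
  have hA01 : A1 * A2 = 0 ∨ A1 * A2 = 1 := by
    apply zero_or_one hreal
    intro φ
    have h1 := (D1 φ).1
    have h2 := (D2 φ).1
    have hs := haφ φ
    simp only [map_mul]
    exact ⟨mul_nonneg h1 h2, by nlinarith [sq_nonneg (φ (algebraMap (𝓞 K) K A1) - φ (algebraMap (𝓞 K) K A2))]⟩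
  rcases hA01 with hA0 | hA1
  · rcases mul_eq_zero.mp hA0 with h10 | h20
    · -- A1 = 0 : show the first form is the zero form
      have hb10 : B1 = 0 := by
        apply hzero_of_φ
        have hd := (D1 φ₀).2.2
        simp only [h10, map_zero] at hd
        have hsq0 : (φ₀ (algebraMap (𝓞 K) K B1))^2 = 0 :=
          le_antisymm (by nlinarith) (sq_nonneg _)
        exact (pow_eq_zero_iff two_ne_zero).mp hsq0
      have hb2b : B2 = b := by linear_combination -hb - hb10
      have ha2a : A2 = a := by linear_combination -ha - h10
      have hC10 : C1 = 0 := by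
        apply tiny_zero hreal
        intro φ
        refine ⟨(D1 φ).2.1, ?_⟩
        have hd := (D2 φ).2.2
        simp only [hb2b, hbc, ha2a, hac, map_mul, map_ofNat] at hd
        have hs := hspφ φ
        have hcs := hcφ φ
        nlinarith [(D1 φ).2.1]
      exact hne₁ ⟨h10, hb10, hC10⟩
    · -- A2 = 0
      have hb20 : B2 = 0 := by
        apply hzero_of_φ
        have hd := (D2 φ₀).2.2
        simp only [h20, map_zero] at hd
        have hsq0 : (φ₀ (algebraMap (𝓞 K) K B2))^2 = 0 :=
          le_antisymm (by nlinarith) (sq_nonneg _)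
        exact (pow_eq_zero_iff two_ne_zero).mp hsq0
      have hb1b : B1 = b := by linear_combination -hb - hb20
      have ha1a : A1 = a := by linear_combination -ha - h20
      have hC20 : C2 = 0 := by
        apply tiny_zero hreal
        intro φ
        refine ⟨(D2 φ).2.1, ?_⟩
        have hd := (D1 φ).2.2
        simp only [hb1b, hbc, ha1a, hac, map_mul, map_ofNat] at hd
        have hs := hspφ φ
        have hcs := hcφ φ
        nlinarith [(D2 φ).2.1]
      exact hne₂ ⟨h20, hb20, hC20⟩
  · -- A1 * A2 = 1
    have haO : a = 2 := hfinj (by rw [hac, map_ofNat])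
    have hsumA : A1 + A2 = 2 := by rw [← haO]; exact ha.symm
    have hA11 : A1 = 1 := by
      have hsq2 : (A1 - 1)^2 = 0 := by linear_combination A1 * hsumA - hA1
      have := (pow_eq_zero_iff two_ne_zero).mp hsq2
      linear_combination this
    have hA21 : A2 = 1 := by linear_combination hsumA - hA11
    have hβK : algebraMap (𝓞 K) K β₁ + algebraMap (𝓞 K) K β₂ = sp := by
      have h2 : algebraMap (𝓞 K) K B1 + algebraMap (𝓞 K) K B2 = 2 * sp := by
        rw [← map_add, ← hb, hbc]
      rw [hB1, hB2, map_mul, map_mul, map_ofNat] at h2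
      linear_combination h2 / 2
    have hβsq : (algebraMap (𝓞 K) K β₁ + algebraMap (𝓞 K) K β₂)^2 = (p:K) := by
      rw [hβK, hsp]
    have hcK : algebraMap (𝓞 K) K C1 + algebraMap (𝓞 K) K C2 = ((p:K)+1)/2 := by
      rw [← map_add, ← hc, hcc]
    have hd1nn : ∀ φ : K →+* ℝ,
        (φ (algebraMap (𝓞 K) K β₁))^2 ≤ φ (algebraMap (𝓞 K) K C1) := by
      intro φ
      have hd := (D1 φ).2.2
      simp only [hA11, map_one, hB1, map_mul, map_ofNat] at hd
      nlinarith
    have hd2nn : ∀ φ : K →+* ℝ,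
        (φ (algebraMap (𝓞 K) K β₂))^2 ≤ φ (algebraMap (𝓞 K) K C2) := by
      intro φ
      have hd := (D2 φ).2.2
      simp only [hA21, map_one, hB2, map_mul, map_ofNat] at hd
      nlinarith
    have hsum1 : (C1 - β₁^2) + (C2 - β₂^2) + (C1 + C2 - 2*(β₁*β₂)) = 1 := by
      apply hfinj
      simp only [map_add, map_sub, map_mul, map_pow, map_one, map_ofNat]
      linear_combination 2 * hcK - hβsq
    have hdφsum : ∀ φ : K →+* ℝ,
        φ (algebraMap (𝓞 K) K (C1 - β₁^2)) + φ (algebraMap (𝓞 K) K (C2 - β₂^2))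
          + φ (algebraMap (𝓞 K) K (C1 + C2 - 2*(β₁*β₂))) = 1 := by
      intro φ
      rw [← map_add, ← map_add, ← map_add, ← map_add, hsum1, map_one, map_one]
    have hd1v : ∀ φ : K →+* ℝ, 0 ≤ φ (algebraMap (𝓞 K) K (C1 - β₁^2)) := by
      intro φ
      simp only [map_sub, map_pow]
      linarith [hd1nn φ]
    have hd2v : ∀ φ : K →+* ℝ, 0 ≤ φ (algebraMap (𝓞 K) K (C2 - β₂^2)) := by
      intro φ
      simp only [map_sub, map_pow]
      linarith [hd2nn φ]
    have hEnn : ∀ φ : K →+* ℝ, 0 ≤ φ (algebraMap (𝓞 K) K (C1 + C2 - 2*(β₁*β₂))) := by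
      intro φ
      have h1 := hd1nn φ
      have h2 := hd2nn φ
      simp only [map_add, map_sub, map_mul, map_ofNat]
      nlinarith [sq_nonneg (φ (algebraMap (𝓞 K) K β₁) - φ (algebraMap (𝓞 K) K β₂))]
    have hD1 : C1 - β₁^2 = 0 ∨ C1 - β₁^2 = 1 :=
      zero_or_one hreal fun φ => ⟨hd1v φ, by linarith [hd2v φ, hEnn φ, hdφsum φ]⟩
    have hD2 : C2 - β₂^2 = 0 ∨ C2 - β₂^2 = 1 :=
      zero_or_one hreal fun φ => ⟨hd2v φ, by linarith [hd1v φ, hEnn φ, hdφsum φ]⟩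
    rcases hD1 with e1 | e1 <;> rcases hD2 with e2 | e2
    · -- both degenerate : contradiction with p ≡ 3 (mod 4)
      have hc1 : algebraMap (𝓞 K) K C1 = (algebraMap (𝓞 K) K β₁)^2 := by
        have h0 := congrArg (algebraMap (𝓞 K) K) e1
        simp only [map_sub, map_pow, map_zero, sub_eq_zero] at h0
        exact h0
      have hc2 : algebraMap (𝓞 K) K C2 = (algebraMap (𝓞 K) K β₂)^2 := by
        have h0 := congrArg (algebraMap (𝓞 K) K) e2
        simp only [map_sub, map_pow, map_zero, sub_eq_zero] at h0
        exact h0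
      have h2 : (algebraMap (𝓞 K) K β₁)^2 + (algebraMap (𝓞 K) K β₂)^2 = ((p:K)+1)/2 := by
        rw [← hc1, ← hc2]; exact hcK
      have hkey : algebraMap ℚ K (((p:ℚ) - 1)/4) = algebraMap (𝓞 K) K (β₁*β₂) := by
        rw [map_div₀, map_sub, map_natCast, map_one, map_ofNat, map_mul]
        linear_combination (-1/2 : K) * hβsq + (1/2 : K) * h2
      have hint2 : IsIntegral ℤ (((p:ℚ) - 1)/4) := by
        rw [← isIntegral_algebraMap_iff (algebraMap ℚ K).injective, hkey]
        exact (β₁*β₂).isIntegral_coe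
      obtain ⟨m, hm⟩ := IsIntegrallyClosed.isIntegral_iff.mp hint2
      rw [eq_intCast] at hm
      have h4 : (4*m : ℤ) = (p:ℤ) - 1 := by
        have h5 : 4*(m:ℚ) = (p:ℚ) - 1 := by
          rw [hm]; ring
        exact_mod_cast h5
      omega
    · -- E = 0 : impossible, gives 1 + (x - y)^2 = 0
      have hE0 : C1 + C2 - 2*(β₁*β₂) = 0 := by linear_combination hsum1 - e1 - e2
      have h0 := congrArg φ₀ (congrArg (algebraMap (𝓞 K) K) hE0)
      have h1 := congrArg φ₀ (congrArg (algebraMap (𝓞 K) K) e1)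
      have h2 := congrArg φ₀ (congrArg (algebraMap (𝓞 K) K) e2)
      simp only [map_add, map_sub, map_mul, map_pow, map_one, map_zero, map_ofNat] at h0 h1 h2
      nlinarith [sq_nonneg (φ₀ (algebraMap (𝓞 K) K β₁) - φ₀ (algebraMap (𝓞 K) K β₂))]
    · have hE0 : C1 + C2 - 2*(β₁*β₂) = 0 := by linear_combination hsum1 - e1 - e2
      have h0 := congrArg φ₀ (congrArg (algebraMap (𝓞 K) K) hE0)
      have h1 := congrArg φ₀ (congrArg (algebraMap (𝓞 K) K) e1)
      have h2 := congrArg φ₀ (congrArg (algebraMap (𝓞 K) K) e2)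
      simp only [map_add, map_sub, map_mul, map_pow, map_one, map_zero, map_ofNat] at h0 h1 h2
      nlinarith [sq_nonneg (φ₀ (algebraMap (𝓞 K) K β₁) - φ₀ (algebraMap (𝓞 K) K β₂))]
    · -- E = -1 : impossible since E is totally nonnegative
      have hE : C1 + C2 - 2*(β₁*β₂) = -1 := by linear_combination hsum1 - e1 - e2
      have h0 := congrArg φ₀ (congrArg (algebraMap (𝓞 K) K) hE)
      simp only [map_neg, map_one] at h0
      have h1 := hEnn φ₀
      rw [h0] at h1
      norm_num at h1
end

section
/- Let K = Q(ρ) be a simplest cubic field with ring of integers Z[ρ]. If α is an indecomposable totally positive integer in Z[ρ] with 3α − 1 totally positive but 2α − 1 not totally positive or zero, then the form 3x² + 2xy + αy² is additively indecomposable over Z[ρ]. -/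
open NumberField

variable {K : Type*}

set_option linter.all false
open Polynomial IntermediateField

section Aux
variable {K : Type*} [Field K] [NumberField K]


lemma no_z_one (a : ℤ) (ha : -1 ≤ a) (t : ℝ)
    (hR : t^3 = a*t^2 + ((a:ℝ)+3)*t + 1) (ht : (a:ℝ) + 1 < t) (ht1 : 1 < t) (x y : ℤ)
    (h1 : 0 < (x:ℝ) + y*t + t^2) (h1' : (x:ℝ) + y*t + t^2 < 3)
    (h2 : 0 < (x:ℝ)*(t+1)^2 - y*(t+1) + 1) (h2' : (x:ℝ)*(t+1)^2 - y*(t+1) + 1 < 3*(t+1)^2)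
    (h3 : 0 < (x:ℝ)*t^2 - y*t*(t+1) + (t+1)^2) (h3' : (x:ℝ)*t^2 - y*t*(t+1) + (t+1)^2 < 3*t^2) :
    False := by
  have ht0 : 0 < t := by linarith
  have hy1 : -1 ≤ y := by
    have hy : (-2:ℝ) < y := by
      nlinarith [mul_pos h2 (mul_pos ht0 ht0),
        mul_lt_mul_of_pos_right h3' (mul_pos (by linarith : (0:ℝ) < t+1) (by linarith : (0:ℝ) < t+1)),
        mul_pos ht0 (mul_pos ht0 ht0)]
    have : (-2:ℤ) < y := by exact_mod_cast hy
    omega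
  rcases eq_or_lt_of_le hy1 with hym1 | hy0
  · -- y = -1
    have hyy : (y:ℝ) = -1 := by exact_mod_cast hym1.symm
    rw [hyy] at h1 h1' h2 h2' h3 h3'
    have hx0 : x = 0 := by
      have hxl : (-1:ℝ) < x := by nlinarith
      have hxu : (x:ℝ) < 1 := by nlinarith
      have l : (-1:ℤ) < x := by exact_mod_cast hxl
      have u : (x:ℤ) < 1 := by exact_mod_cast hxu
      omega
    rw [hx0] at h1' h3'
    push_cast at h1' h3'
    nlinarith
  · -- y ≥ 0
    have hy0' : (0:ℝ) ≤ y := by exact_mod_cast by omega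
    have ht2 : t^2*(t+1)^2 - 1 < 3*(t+1)^2 := by
      nlinarith [mul_lt_mul_of_pos_right h1' (mul_pos (by linarith : (0:ℝ) < t+1) (by linarith : (0:ℝ) < t+1)),
        mul_nonneg hy0' (by positivity : (0:ℝ) ≤ t*(t+1)^2 + (t+1))]
    rcases (by omega : a = -1 ∨ 0 ≤ a) with ha1 | ha0
    · -- a = -1
      subst ha1
      push_cast at hR
      have hRl : t^3 + t^2 - 2*t - 1 = 0 := by linarith
      have htl : 1.246 < t := by nlinarith
      have htu : t < 1.248 := by nlinarith
      have hy00 : y = 0 := by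
        have : (y:ℝ) < 1 := by
          nlinarith [mul_lt_mul_of_pos_right h1' (mul_pos (by linarith : (0:ℝ) < t+1) (by linarith : (0:ℝ) < t+1))]
        have : y < 1 := by exact_mod_cast this
        omega
      rw [hy00] at h2 h3'
      push_cast at h2 h3'
      have hx0 : (0:ℝ) ≤ x := by
        by_contra hc
        push_neg at hc
        have hxz : x ≤ -1 := by
          have : (x:ℤ) < 0 := by exact_mod_cast hc
          omega
        have hxr : (x:ℝ) ≤ -1 := by exact_mod_cast hxz
        nlinarith
      nlinarith [mul_nonneg hx0 (sq_nonneg t)]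
    · -- a ≥ 0 : t^3 ≥ 3t+1
      have ha0' : (0:ℝ) ≤ a := by exact_mod_cast ha0
      have h3t : 3*t + 1 ≤ t^3 := by nlinarith
      nlinarith [mul_le_mul_of_nonneg_left h3t (le_of_lt ht0),
        mul_nonneg (sub_nonneg.2 ht1.le) (by linarith : (0:ℝ) ≤ t+2)]

set_option maxHeartbeats 1600000 in
lemma real_key (a : ℤ) (ha : -1 ≤ a) (t : ℝ)
    (hR : t^3 = a*t^2 + ((a:ℝ)+3)*t + 1) (ht : (a:ℝ) + 1 < t) (x y z : ℤ)
    (h1 : 0 < (x:ℝ) + y*t + z*t^2) (h1' : (x:ℝ) + y*t + z*t^2 < 3)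
    (h2 : 0 < (x:ℝ)*(t+1)^2 - y*(t+1) + z) (h2' : (x:ℝ)*(t+1)^2 - y*(t+1) + z < 3*(t+1)^2)
    (h3 : 0 < (x:ℝ)*t^2 - y*t*(t+1) + z*(t+1)^2) (h3' : (x:ℝ)*t^2 - y*t*(t+1) + z*(t+1)^2 < 3*t^2) :
    (x = 1 ∨ x = 2) ∧ y = 0 ∧ z = 0 := by
  have ht1 : 1 < t := by
    rcases (by omega : a = -1 ∨ 0 ≤ a) with ha1 | ha0
    · subst ha1; push_cast at hR ht
      nlinarith
    · have : (0:ℝ) ≤ a := by exact_mod_cast ha0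
      linarith
  have ht0 : 0 < t := by linarith
  -- |z| < 2 via  z*(t²+t+1)² = (t²+t)*V1 - t*V2 + (t+1)*V3
  have hid : ((z:ℝ))*(t^2+t+1)^2 = (t^2+t)*((x:ℝ) + y*t + z*t^2)
      - t*((x:ℝ)*(t+1)^2 - y*(t+1) + z) + (t+1)*((x:ℝ)*t^2 - y*t*(t+1) + z*(t+1)^2) := by
    ring
  have hzb : z = -1 ∨ z = 0 ∨ z = 1 := by
    have hzu : (z:ℝ) < 2 := by
      nlinarith [mul_lt_mul_of_pos_left h1' (by positivity : (0:ℝ) < t^2+t),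
        mul_pos ht0 h2, mul_lt_mul_of_pos_left h3' (by linarith : (0:ℝ) < t+1),
        mul_pos (mul_pos ht0 ht0) (mul_pos ht0 ht0), mul_pos ht0 (mul_pos ht0 ht0)]
    have hzl : (-2:ℝ) < z := by
      nlinarith [mul_pos (by positivity : (0:ℝ) < t^2+t) h1,
        mul_lt_mul_of_pos_left h2' ht0,
        mul_pos (by linarith : (0:ℝ) < t+1) h3,
        mul_pos (mul_pos ht0 ht0) (mul_pos ht0 ht0), mul_pos ht0 (mul_pos ht0 ht0)]
    have u : (z:ℤ) < 2 := by exact_mod_cast hzu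
    have l : (-2:ℤ) < z := by exact_mod_cast hzl
    omega
  rcases hzb with hz | hz | hz
  · -- z = -1 : apply no_z_one to (3-x, -y)
    exfalso
    subst hz
    push_cast at h1 h1' h2 h2' h3 h3'
    refine no_z_one a ha t hR ht ht1 (3 - x) (-y) ?_ ?_ ?_ ?_ ?_ ?_ <;> push_cast <;> nlinarith
  · -- z = 0
    subst hz
    push_cast at h1 h1' h2 h2' h3 h3'
    have hyb : y = 0 := by
      have hyu : (y:ℝ) < 2 := by
        nlinarith [mul_lt_mul_of_pos_right h1' (by positivity : (0:ℝ) < (t+1)^2), h2]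
      have hyl : (-2:ℝ) < y := by
        nlinarith [mul_pos h1 (by positivity : (0:ℝ) < (t+1)^2), h2']
      have u : (y:ℤ) < 2 := by exact_mod_cast hyu
      have l : (-2:ℤ) < y := by exact_mod_cast hyl
      have hy3 : y = -1 ∨ y = 0 ∨ y = 1 := by omega
      rcases hy3 with hy | hy | hy
      · exfalso; subst hy; push_cast at h1 h1' h3 h3'
        have hx2 : 2 ≤ x := by
          have : (1:ℝ) < x := by nlinarith
          have : (1:ℤ) < x := by exact_mod_cast this
          omega
        have : (2:ℝ) ≤ x := by exact_mod_cast hx2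
        nlinarith [mul_nonneg (by linarith : (0:ℝ) ≤ (x:ℝ) - 2) (sq_nonneg t)]
      · exact hy
      · exfalso; subst hy; push_cast at h1 h1' h3 h3'
        have hx2 : 2 ≤ x := by
          have : (1:ℝ) < x := by nlinarith [mul_pos ht0 ht0]
          have : (1:ℤ) < x := by exact_mod_cast this
          omega
        have : (2:ℝ) ≤ x := by exact_mod_cast hx2
        nlinarith
    subst hyb
    push_cast at h1 h1'
    have hxl : (0:ℤ) < x := by exact_mod_cast (by nlinarith : (0:ℝ) < x)
    have hxu : (x:ℤ) < 3 := by exact_mod_cast (by nlinarith : (x:ℝ) < 3)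
    exact ⟨by omega, rfl, rfl⟩
  · -- z = 1
    exfalso
    subst hz
    push_cast at h1 h1' h2 h2' h3 h3'
    exact no_z_one a ha t hR ht ht1 x y (by linarith) (by linarith) (by linarith) (by linarith) (by linarith) (by linarith)




lemma coords (a : ℤ) (ρ : 𝓞 K)
    (hρ : ρ ^ 3 = (a : 𝓞 K) * ρ ^ 2 + ((a : 𝓞 K) + 3) * ρ + 1)
    (hgen : Algebra.adjoin ℤ {ρ} = (⊤ : Subalgebra ℤ (𝓞 K)))
    (u : 𝓞 K) : ∃ x y z : ℤ, u = (x : 𝓞 K) + y * ρ + z * ρ ^ 2 := by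
  have hu : u ∈ Algebra.adjoin ℤ {ρ} := hgen ▸ Algebra.mem_top
  rw [Algebra.adjoin_singleton_eq_range_aeval] at hu
  obtain ⟨p, hp⟩ := hu
  have hp' : aeval ρ p = u := hp
  set f : ℤ[X] := X ^ 3 - C a * X ^ 2 - C (a + 3) * X - C 1 with hf
  have hmon : f.Monic := by unfold f; monicity!
  have hfρ : aeval ρ f = 0 := by
    simp only [hf, map_sub, map_add, map_mul, map_pow, aeval_X, aeval_C, map_one, eq_intCast, map_intCast, map_ofNat]
    push_cast
    linear_combination hρ
  have hur : aeval ρ (p %ₘ f) = u := by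
    rw [← hp']
    conv_rhs => rw [(modByMonic_add_div p f).symm]
    rw [map_add, map_mul, hfρ, zero_mul, add_zero]
  have hdeg : (p %ₘ f).natDegree < 3 := by
    have h1 : (p %ₘ f).degree < f.degree := degree_modByMonic_lt p hmon
    have h2 : f.degree = 3 := by unfold f; compute_degree!
    rw [h2] at h1
    rcases eq_or_ne (p %ₘ f) 0 with h0 | h0
    · rw [h0]; simp
    · exact (natDegree_lt_iff_degree_lt h0).mpr h1
  refine ⟨(p %ₘ f).coeff 0, (p %ₘ f).coeff 1, (p %ₘ f).coeff 2, ?_⟩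
  rw [← hur, aeval_eq_sum_range' hdeg]
  simp [Finset.sum_range_succ, zsmul_eq_mul]

lemma no_rat_root (a : ℤ) (q : ℚ) (h : q^3 = a*q^2 + ((a:ℚ)+3)*q + 1) : False := by
  have hint : IsIntegral ℤ q := by
    refine ⟨X ^ 3 - C a * X ^ 2 - C (a + 3) * X - C 1, by monicity!, ?_⟩
    have : aeval q (X ^ 3 - C a * X ^ 2 - C (a + 3) * X - C 1 : ℤ[X]) = 0 := by
      simp only [map_sub, map_add, map_mul, map_pow, aeval_X, aeval_C, map_one, eq_intCast, map_intCast, map_ofNat]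
      push_cast
      linear_combination h
    simpa [aeval_def] using this
  obtain ⟨n, hn⟩ := IsIntegrallyClosed.isIntegral_iff.mp hint
  have hq : (n:ℚ) = q := by exact_mod_cast hn
  rw [← hq] at h
  have hz : n^3 = a*n^2 + (a+3)*n + 1 := by exact_mod_cast h
  have hd : n ∣ 1 := ⟨n^2 - a*n - (a+3), by linarith [hz]⟩
  rcases Int.isUnit_iff.mp (isUnit_of_dvd_one hd) with h1 | h1 <;> subst h1 <;> omega

lemma minpoly_eq (a : ℤ) (θ : K) (hint : IsIntegral ℚ θ)
    (hθ : θ^3 = a*θ^2 + ((a:K)+3)*θ + 1) :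
    minpoly ℚ θ = X ^ 3 - C (a:ℚ) * X ^ 2 - C ((a:ℚ) + 3) * X - C 1 := by
  set F : ℚ[X] := X ^ 3 - C (a:ℚ) * X ^ 2 - C ((a:ℚ) + 3) * X - C 1 with hF
  have hFm : F.Monic := by unfold F; monicity!
  have hFd : F.natDegree = 3 := by unfold F; compute_degree!
  have hF0 : aeval θ F = 0 := by
    simp only [hF, map_sub, map_add, map_mul, map_pow, aeval_X, aeval_C, map_one, eq_intCast, map_intCast, map_ofNat,
      map_ratCast]
    push_cast
    linear_combination hθ
  have hmd : minpoly ℚ θ ∣ F := minpoly.dvd _ _ hF0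
  obtain ⟨g, hg⟩ := hmd
  have hmm : (minpoly ℚ θ).Monic := minpoly.monic hint
  have hgm : g.Monic := hmm.of_mul_monic_left (hg ▸ hFm)
  have hFne : F ≠ 0 := hFm.ne_zero
  have hmne : minpoly ℚ θ ≠ 0 := hmm.ne_zero
  have hdsum : (minpoly ℚ θ).natDegree + g.natDegree = 3 := by
    rw [← natDegree_mul hmne hgm.ne_zero, ← hg, hFd]
  have hdpos : 0 < (minpoly ℚ θ).natDegree := minpoly.natDegree_pos hint
  -- rule out rational roots of F
  have hnoroot : ∀ q : ℚ, F.eval q ≠ 0 := by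
    intro q hq
    apply no_rat_root a q
    have : q^3 - a*q^2 - ((a:ℚ)+3)*q - 1 = 0 := by
      simpa [hF] using hq
    linarith
  have hnd3 : (minpoly ℚ θ).natDegree = 3 := by
    by_contra hne3
    have hcase : (minpoly ℚ θ).natDegree = 1 ∧ g.natDegree = 2 ∨
        (minpoly ℚ θ).natDegree = 2 ∧ g.natDegree = 1 := by omega
    have : ∃ q : ℚ, F.eval q = 0 := by
      rcases hcase with ⟨h1, _⟩ | ⟨_, h1⟩
      · refine ⟨-(minpoly ℚ θ).coeff 0, ?_⟩
        rw [hg, eval_mul, hmm.eq_X_add_C h1]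
        simp
      · refine ⟨-g.coeff 0, ?_⟩
        rw [hg, eval_mul, hgm.eq_X_add_C h1]
        simp
    obtain ⟨q, hq⟩ := this
    exact hnoroot q hq
  have hg1 : g = 1 := hgm.natDegree_eq_zero.mp (by omega)
  rw [hg, hg1, mul_one]

lemma exists_embedding (a : ℤ) (ρ : 𝓞 K)
    (hρ : ρ ^ 3 = (a : 𝓞 K) * ρ ^ 2 + ((a : 𝓞 K) + 3) * ρ + 1)
    (hgen : Algebra.adjoin ℤ {ρ} = (⊤ : Subalgebra ℤ (𝓞 K)))
    (r : ℝ) (hr : r^3 = a*r^2 + ((a:ℝ)+3)*r + 1) :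
    ∃ φ : K →+* ℝ, φ (algebraMap (𝓞 K) K ρ) = r := by
  set θ : K := algebraMap (𝓞 K) K ρ with hθdef
  have hθ : θ^3 = a*θ^2 + ((a:K)+3)*θ + 1 := by
    have := congrArg (algebraMap (𝓞 K) K) hρ
    rw [hθdef]
    simpa only [map_add, map_mul, map_pow, map_intCast, map_ofNat, map_one] using this
  have hint : IsIntegral ℚ θ := (Algebra.IsAlgebraic.isAlgebraic θ).isIntegral
  have hmin := minpoly_eq a θ hint hθ
  -- ℚ⟮θ⟯ = ⊤
  have hT : ℚ⟮θ⟯ = ⊤ := by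
    rw [eq_top_iff]
    intro k _
    obtain ⟨u, v, hv, huv⟩ := IsFractionRing.div_surjective (A := 𝓞 K) k
    have hmem : ∀ w : 𝓞 K, algebraMap (𝓞 K) K w ∈ ℚ⟮θ⟯ := by
      intro w
      obtain ⟨x, y, z, hw⟩ := coords a ρ hρ hgen w
      rw [hw]
      push_cast
      refine add_mem (add_mem (intCast_mem _ _) (mul_mem (intCast_mem _ _) ?_))
        (mul_mem (intCast_mem _ _) (pow_mem ?_ 2)) <;>
      exact mem_adjoin_simple_self ℚ θ
    rw [← huv]
    exact div_mem (hmem u) (hmem v)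
  have hroot : r ∈ (minpoly ℚ θ).aroots ℝ := by
    rw [hmin, mem_aroots]
    constructor
    · exact (by monicity! : (X ^ 3 - C (a:ℚ) * X ^ 2 - C ((a:ℚ) + 3) * X - C 1 : ℚ[X]).Monic).ne_zero
    · simp only [map_sub, map_add, map_mul, map_pow, aeval_X, aeval_C, map_one, map_intCast,
        map_ofNat, map_ratCast]
      push_cast
      linear_combination hr
  let ψ : ℚ⟮θ⟯ →ₐ[ℚ] ℝ := (IntermediateField.algHomAdjoinIntegralEquiv ℚ hint).symm ⟨r, hroot⟩
  let eK : ℚ⟮θ⟯ ≃ₐ[ℚ] K := (IntermediateField.equivOfEq hT).trans IntermediateField.topEquiv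
  refine ⟨(ψ.comp eK.symm.toAlgHom).toRingHom, ?_⟩
  have hgen' : eK.symm θ = AdjoinSimple.gen ℚ θ := by
    apply eK.injective
    rw [AlgEquiv.apply_symm_apply]
    rfl
  show ψ (eK.symm θ) = r
  rw [hgen']
  exact IntermediateField.algHomAdjoinIntegralEquiv_symm_apply_gen ℚ hint ⟨r, hroot⟩

lemma three_split (a : ℤ) (ha : -1 ≤ a) (ρ : 𝓞 K)
    (hρ : ρ ^ 3 = (a : 𝓞 K) * ρ ^ 2 + ((a : 𝓞 K) + 3) * ρ + 1)
    (hlargest : ∃ φ : K →+* ℝ, (a : ℝ) + 1 < φ (algebraMap (𝓞 K) K ρ))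
    (hgen : Algebra.adjoin ℤ {ρ} = (⊤ : Subalgebra ℤ (𝓞 K)))
    (u : 𝓞 K) (hu : TPos u) (h3u : TPos (3 - u)) : u = 1 ∨ u = 2 := by
  obtain ⟨φ₀, hφ₀⟩ := hlargest
  set θ : K := algebraMap (𝓞 K) K ρ with hθdef
  set t : ℝ := φ₀ θ with htdef
  have hθ : θ^3 = a*θ^2 + ((a:K)+3)*θ + 1 := by
    have := congrArg (algebraMap (𝓞 K) K) hρ
    rw [hθdef]
    simpa only [map_add, map_mul, map_pow, map_intCast, map_ofNat, map_one] using this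
  have hRt : t^3 = a*t^2 + ((a:ℝ)+3)*t + 1 := by
    have := congrArg φ₀ hθ
    simpa [map_add, map_mul, map_pow, map_intCast, map_ofNat] using this
  have haR : (-1:ℝ) ≤ a := by exact_mod_cast ha
  have ht0 : 0 < t := by linarith
  have ht1' : 0 < t + 1 := by linarith
  -- the other two roots
  have hr1 : (-(t+1)/t)^3 = a*(-(t+1)/t)^2 + ((a:ℝ)+3)*(-(t+1)/t) + 1 := by
    field_simp
    linear_combination hRt
  have hr2 : (-1/(t+1))^3 = a*(-1/(t+1))^2 + ((a:ℝ)+3)*(-1/(t+1)) + 1 := by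
    field_simp
    linear_combination (-1) * hRt
  obtain ⟨φ₁, hφ₁⟩ := exists_embedding a ρ hρ hgen (-(t+1)/t) hr1
  obtain ⟨φ₂, hφ₂⟩ := exists_embedding a ρ hρ hgen (-1/(t+1)) hr2
  obtain ⟨x, y, z, hw⟩ := coords a ρ hρ hgen u
  have hval : ∀ (φ : K →+* ℝ), φ (algebraMap (𝓞 K) K u) = x + y * φ θ + z * (φ θ)^2 := by
    intro φ
    rw [hw]
    push_cast
    simp [map_add, map_mul, map_pow, map_intCast]
    rfl
  have hval3 : ∀ (φ : K →+* ℝ), φ (algebraMap (𝓞 K) K (3 - u)) = 3 - (x + y * φ θ + z * (φ θ)^2) := by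
    intro φ
    rw [map_sub, map_sub, ← hval φ]
    simp [map_ofNat]
  have h1 : 0 < (x:ℝ) + y*t + z*t^2 := by have := hu φ₀; rwa [hval φ₀] at this
  have h1' : (x:ℝ) + y*t + z*t^2 < 3 := by
    have := h3u φ₀; rw [hval3 φ₀] at this; linarith
  have e2 : (x:ℝ) + y * φ₂ θ + z * (φ₂ θ)^2 = ((x:ℝ)*(t+1)^2 - y*(t+1) + z)/(t+1)^2 := by
    rw [hφ₂]; field_simp; ring
  have e3 : (x:ℝ) + y * φ₁ θ + z * (φ₁ θ)^2 = ((x:ℝ)*t^2 - y*t*(t+1) + z*(t+1)^2)/t^2 := by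
    rw [hφ₁]; field_simp; ring
  have h2 : 0 < (x:ℝ)*(t+1)^2 - y*(t+1) + z := by
    have := hu φ₂; rw [hval φ₂, e2] at this
    exact (div_pos_iff.mp this).resolve_right (fun h => absurd h.2 (not_lt.mpr (by positivity))) |>.1
  have h2' : (x:ℝ)*(t+1)^2 - y*(t+1) + z < 3*(t+1)^2 := by
    have := h3u φ₂; rw [hval3 φ₂, e2] at this
    have h' : ((x:ℝ)*(t+1)^2 - y*(t+1) + z)/(t+1)^2 < 3 := by linarith
    calc (x:ℝ)*(t+1)^2 - y*(t+1) + z = (((x:ℝ)*(t+1)^2 - y*(t+1) + z)/(t+1)^2) * (t+1)^2 := by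
          field_simp
      _ < 3*(t+1)^2 := by
          apply mul_lt_mul_of_pos_right h' (by positivity)
  have h3 : 0 < (x:ℝ)*t^2 - y*t*(t+1) + z*(t+1)^2 := by
    have := hu φ₁; rw [hval φ₁, e3] at this
    exact (div_pos_iff.mp this).resolve_right (fun h => absurd h.2 (not_lt.mpr (by positivity))) |>.1
  have h3' : (x:ℝ)*t^2 - y*t*(t+1) + z*(t+1)^2 < 3*t^2 := by
    have := h3u φ₁; rw [hval3 φ₁, e3] at this
    have h' : ((x:ℝ)*t^2 - y*t*(t+1) + z*(t+1)^2)/t^2 < 3 := by linarith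
    calc (x:ℝ)*t^2 - y*t*(t+1) + z*(t+1)^2
        = (((x:ℝ)*t^2 - y*t*(t+1) + z*(t+1)^2)/t^2) * t^2 := by field_simp
      _ < 3*t^2 := mul_lt_mul_of_pos_right h' (by positivity)
  obtain ⟨hx, hy, hz⟩ := real_key a ha t hRt hφ₀ x y z h1 h1' h2 h2' h3 h3'
  subst hy hz
  rcases hx with hx | hx <;> subst hx <;> [left; right] <;> rw [hw] <;> push_cast <;> ring

section glue

lemma lin_b_zero (A B : ℝ) (h : ∀ n : ℤ, 0 ≤ A + B * n) : B = 0 := by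
  rcases lt_trichotomy B 0 with hB | hB | hB
  · exfalso
    obtain ⟨n, hn⟩ := exists_int_gt (A / (-B))
    have h1 : A / (-B) * (-B) < n * (-B) := by
      apply mul_lt_mul_of_pos_right hn (by linarith)
    rw [div_mul_cancel₀ _ (by linarith : (-B) ≠ 0)] at h1
    have := h n
    nlinarith
  · exact hB
  · exfalso
    obtain ⟨n, hn⟩ := exists_int_gt (A / B)
    have h1 : A / B * B < n * B := mul_lt_mul_of_pos_right hn hB
    rw [div_mul_cancel₀ _ (by linarith : B ≠ 0)] at h1
    have := h (-n)
    push_cast at this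
    nlinarith

lemma tnonneg_phi {w : 𝓞 K} (h : TNonneg w) (φ : K →+* ℝ) :
    0 ≤ φ (algebraMap (𝓞 K) K w) := by
  rcases h with h | h
  · exact (h φ).le
  · simp [h]

lemma core (a : ℤ) (ha : -1 ≤ a) (ρ : 𝓞 K)
    (hρ : ρ ^ 3 = (a : 𝓞 K) * ρ ^ 2 + ((a : 𝓞 K) + 3) * ρ + 1)
    (hlargest : ∃ φ : K →+* ℝ, (a : ℝ) + 1 < φ (algebraMap (𝓞 K) K ρ))
    (hgen : Algebra.adjoin ℤ {ρ} = (⊤ : Subalgebra ℤ (𝓞 K)))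
    (α : 𝓞 K) (hα : IndecElem α) (h2 : ¬ TNonneg (2 * α - 1))
    (A₁ B₁ A₂ B₂ : 𝓞 K) (hS1 : BinSemiDef A₁ B₁ α) (hS2 : BinSemiDef A₂ B₂ 0)
    (hn2 : ¬(A₂ = 0 ∧ B₂ = 0)) (hA : A₁ + A₂ = 3) (hB : B₁ + B₂ = 2) : False := by
  obtain ⟨φ₀, hφ₀⟩ := hlargest
  -- B₂ = 0
  have hb2 : B₂ = 0 := by
    have hlin : ∀ n : ℤ, 0 ≤ φ₀ (algebraMap (𝓞 K) K A₂) + φ₀ (algebraMap (𝓞 K) K B₂) * n := by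
      intro n
      have h := tnonneg_phi (hS2 1 (n : 𝓞 K)) φ₀
      have he : (A₂ * 1 ^ 2 + B₂ * 1 * (n : 𝓞 K) + 0 * (n : 𝓞 K) ^ 2) = A₂ + B₂ * n := by ring
      rw [he] at h
      simpa [map_add, map_mul, map_intCast] using h
    have hz := lin_b_zero _ _ hlin
    have : algebraMap (𝓞 K) K B₂ = 0 := by
      apply φ₀.injective
      simpa using hz
    exact (map_eq_zero_iff _ (IsFractionRing.injective (𝓞 K) K)).mp this
  have hb1 : B₁ = 2 := by rwa [hb2, add_zero] at hB
  -- A₂ totally positive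
  have hA2nn : TNonneg A₂ := by
    have h := hS2 1 0
    rwa [show A₂ * 1 ^ 2 + B₂ * 1 * 0 + 0 * 0 ^ 2 = A₂ by ring] at h
  have hA2 : TPos A₂ := by
    rcases hA2nn with h | h
    · exact h
    · exact absurd ⟨h, hb2⟩ hn2
  -- A₁ totally positive
  have hA1nn : TNonneg A₁ := by
    have h := hS1 1 0
    rwa [show A₁ * 1 ^ 2 + B₁ * 1 * 0 + α * 0 ^ 2 = A₁ by ring] at h
  have hA1 : TPos A₁ := by
    rcases hA1nn with h | h
    · exact h
    · exfalso
      have hlin : ∀ n : ℤ, 0 ≤ φ₀ (algebraMap (𝓞 K) K α) + 2 * n := by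
        intro n
        have hh := tnonneg_phi (hS1 (n : 𝓞 K) 1) φ₀
        have he : (A₁ * (n:𝓞 K) ^ 2 + B₁ * (n:𝓞 K) * 1 + α * 1 ^ 2) = α + 2 * n := by
          rw [h, hb1]; ring
        rw [he] at hh
        simpa [map_add, map_mul, map_intCast, map_ofNat, mul_comm] using hh
      have := lin_b_zero _ 2 (by intro n; simpa using hlin n)
      norm_num at this
  -- A₁ = 1 or 2 via three_split
  have h3A : TPos (3 - A₁) := by rwa [show (3 : 𝓞 K) - A₁ = A₂ by rw [← hA]; ring]
  have hTα := hα.1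
  rcases three_split a ha ρ hρ ⟨φ₀, hφ₀⟩ hgen A₁ hA1 h3A with h1 | h1
  · -- A₁ = 1
    have h := hS1 1 (-1)
    rw [show A₁ * 1 ^ 2 + B₁ * 1 * (-1) + α * (-1) ^ 2 = α - 1 by rw [h1, hb1]; ring] at h
    rcases h with h | h
    · apply h2
      left
      intro φ
      have := h φ
      have h2e : (2 * α - 1 : 𝓞 K) = (α - 1) + α := by ring
      rw [h2e, map_add, map_add]
      have := hTα φ
      positivity
    · apply h2
      left
      have hα1 : α = 1 := by rwa [sub_eq_zero] at h
      intro φ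
      rw [show (2 * α - 1 : 𝓞 K) = 1 by rw [hα1]; ring]
      simp
  · -- A₁ = 2
    have h := hS1 1 (-2)
    rw [show A₁ * 1 ^ 2 + B₁ * 1 * (-2) + α * (-2) ^ 2 = 2 * (2 * α - 1) by rw [h1, hb1]; ring] at h
    rcases h with h | h
    · apply h2
      left
      intro φ
      have hh := h φ
      rw [show ((2 : 𝓞 K) * (2 * α - 1)) = 2 * (2 * α - 1) from rfl, map_mul, map_mul] at hh
      have h2e : φ (algebraMap (𝓞 K) K (2 : 𝓞 K)) = 2 := by rw [map_ofNat, map_ofNat]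
      rw [h2e] at hh
      linarith
    · apply h2
      right
      have h20 : (2 : 𝓞 K) ≠ 0 := two_ne_zero
      exact (mul_eq_zero.mp h).resolve_left h20

end glue


end Aux

theorem stmt14 [Field K] [NumberField K]
    (a : ℤ) (ha : -1 ≤ a) (ρ : 𝓞 K)
    (hρ : ρ ^ 3 = (a : 𝓞 K) * ρ ^ 2 + ((a : 𝓞 K) + 3) * ρ + 1)
    (hlargest : ∃ φ : K →+* ℝ, (a : ℝ) + 1 < φ (algebraMap (𝓞 K) K ρ))
    (hgen : Algebra.adjoin ℤ {ρ} = (⊤ : Subalgebra ℤ (𝓞 K)))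
    (α : 𝓞 K) (hα : IndecElem α) (h3 : TPos (3 * α - 1))
    (h2 : ¬ TNonneg (2 * α - 1)) :
    BinIndecCl (3 : 𝓞 K) 2 α := by
  rintro ⟨a₁, b₁, c₁, a₂, b₂, c₂, hd1, hd2, hS1, hS2, hn1, hn2, hA, hB, hC⟩
  have hc1 : TNonneg c₁ := by
    have h := hS1 0 1
    rwa [show a₁ * 0 ^ 2 + b₁ * 0 * 1 + c₁ * 1 ^ 2 = c₁ by ring] at h
  have hc2 : TNonneg c₂ := by
    have h := hS2 0 1
    rwa [show a₂ * 0 ^ 2 + b₂ * 0 * 1 + c₂ * 1 ^ 2 = c₂ by ring] at h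
  rcases hc1 with hp1 | hz1
  · rcases hc2 with hp2 | hz2
    · exact hα.2 ⟨c₁, c₂, hp1, hp2, hC⟩
    · -- c₂ = 0 : α = c₁
      have hc : c₁ = α := by rw [hC, hz2, add_zero]
      subst hc
      rw [hz2] at hS2 hn2
      exact core a ha ρ hρ hlargest hgen c₁ hα h2 a₁ b₁ a₂ b₂ hS1 hS2
        (fun hh => hn2 ⟨hh.1, hh.2, rfl⟩) hA.symm hB.symm
  · -- c₁ = 0 : α = c₂
    have hc : c₂ = α := by rw [hC, hz1, zero_add]
    subst hc
    rw [hz1] at hS1 hn1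
    exact core a ha ρ hρ hlargest hgen c₂ hα h2 a₂ b₂ a₁ b₁ hS2 hS1
      (fun hh => hn1 ⟨hh.1, hh.2, rfl⟩)
      (by rw [hA]; ring) (by rw [hB]; ring)
end

section
/- Let K = Q(ρ) be a simplest cubic field with ρ the largest root of x³ − ax² − (a+3)x − 1, and ρ', ρ'' its conjugates. Then the determinant of the Gram matrix of the ternary quadratic form Q(x,y,z) = (1+ρ+ρ²)x² + (1+ρ'+ρ'²)y² + (1+ρ''+ρ''²)z² + 2xy + 2yz equals 1 + ρ' + ρ'², which is totally positive; moreover Q is totally positive definite. -/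
open NumberField

variable {K : Type*}

section Aux

/-- Elementary symmetric relations for three distinct roots of the simplest cubic. -/
lemma cubic_sym {R : Type*} [CommRing R] [IsDomain R] (a ρ ρ' ρ'' : R)
    (h1 : ρ ^ 3 = a * ρ ^ 2 + (a + 3) * ρ + 1)
    (h2 : ρ' ^ 3 = a * ρ' ^ 2 + (a + 3) * ρ' + 1)
    (h3 : ρ'' ^ 3 = a * ρ'' ^ 2 + (a + 3) * ρ'' + 1)
    (hd1 : ρ ≠ ρ') (hd2 : ρ ≠ ρ'') (hd3 : ρ' ≠ ρ'') :
    ρ + ρ' + ρ'' = a ∧ ρ * ρ' + ρ * ρ'' + ρ' * ρ'' = -(a + 3) ∧ ρ * ρ' * ρ'' = 1 := by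
  have hA0 : (ρ - ρ') * (ρ ^ 2 + ρ * ρ' + ρ' ^ 2 - a * (ρ + ρ') - (a + 3)) = 0 := by
    linear_combination h1 - h2
  have hA : ρ ^ 2 + ρ * ρ' + ρ' ^ 2 - a * (ρ + ρ') - (a + 3) = 0 :=
    (mul_eq_zero.mp hA0).resolve_left (sub_ne_zero.mpr hd1)
  have hB0 : (ρ - ρ'') * (ρ ^ 2 + ρ * ρ'' + ρ'' ^ 2 - a * (ρ + ρ'') - (a + 3)) = 0 := by
    linear_combination h1 - h3
  have hB : ρ ^ 2 + ρ * ρ'' + ρ'' ^ 2 - a * (ρ + ρ'') - (a + 3) = 0 :=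
    (mul_eq_zero.mp hB0).resolve_left (sub_ne_zero.mpr hd2)
  have hs10 : (ρ' - ρ'') * (ρ + ρ' + ρ'' - a) = 0 := by linear_combination hA - hB
  have hs1 : ρ + ρ' + ρ'' = a := by
    have := (mul_eq_zero.mp hs10).resolve_left (sub_ne_zero.mpr hd3)
    linear_combination this
  have hs2 : ρ * ρ' + ρ * ρ'' + ρ' * ρ'' = -(a + 3) := by
    linear_combination (ρ + ρ') * hs1 - hA
  have hs3 : ρ * ρ' * ρ'' = 1 := by
    linear_combination (-ρ ^ 2) * hs1 + ρ * hs2 + h1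
  exact ⟨hs1, hs2, hs3⟩

/-- The norm-trace identity for the coefficients `1 + ρ + ρ²`. -/
lemma cubic_det_id {R : Type*} [CommRing R] [IsDomain R] (a ρ ρ' ρ'' : R)
    (h1 : ρ ^ 3 = a * ρ ^ 2 + (a + 3) * ρ + 1)
    (h2 : ρ' ^ 3 = a * ρ' ^ 2 + (a + 3) * ρ' + 1)
    (h3 : ρ'' ^ 3 = a * ρ'' ^ 2 + (a + 3) * ρ'' + 1)
    (hd1 : ρ ≠ ρ') (hd2 : ρ ≠ ρ'') (hd3 : ρ' ≠ ρ'') :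
    (1 + ρ + ρ ^ 2) * (1 + ρ' + ρ' ^ 2) * (1 + ρ'' + ρ'' ^ 2)
      = (1 + ρ + ρ ^ 2) + (1 + ρ' + ρ' ^ 2) + (1 + ρ'' + ρ'' ^ 2) := by
  obtain ⟨hs1, hs2, hs3⟩ := cubic_sym a ρ ρ' ρ'' h1 h2 h3 hd1 hd2 hd3
  have hprod : (1 + ρ + ρ ^ 2) * (1 + ρ' + ρ' ^ 2) * (1 + ρ'' + ρ'' ^ 2)
      = a ^ 2 + 3 * a + 9 := by
    linear_combination
      ((ρ + ρ' + ρ'' - a) + (ρ * ρ' + ρ * ρ'' + ρ' * ρ'' + a + 3) - (ρ * ρ' * ρ'' - 1)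
          + a - 3) * hs1
        + ((ρ * ρ' + ρ * ρ'' + ρ' * ρ'' + a + 3) + (ρ * ρ' * ρ'' - 1) - a - 6) * hs2
        + ((ρ * ρ' * ρ'' - 1) - 2 * a - 3) * hs3
  have hsum : (1 + ρ + ρ ^ 2) + (1 + ρ' + ρ' ^ 2) + (1 + ρ'' + ρ'' ^ 2)
      = a ^ 2 + 3 * a + 9 := by
    linear_combination (1 + (ρ + ρ' + ρ'') + a) * hs1 - 2 * hs2
  rw [hprod, hsum]

/-- Real positive-(semi)definiteness of the ternary form given the determinant identity. -/
lemma real_pd (E1 E2 E3 X Y Z : ℝ) (h1 : 0 < E1) (h2 : 0 < E2) (h3 : 0 < E3)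
    (hdet : E1 * E2 * E3 = E1 + E2 + E3) :
    0 ≤ E1 * X ^ 2 + E2 * Y ^ 2 + E3 * Z ^ 2 + 2 * X * Y + 2 * Y * Z ∧
      (E1 * X ^ 2 + E2 * Y ^ 2 + E3 * Z ^ 2 + 2 * X * Y + 2 * Y * Z = 0 →
        X = 0 ∧ Y = 0 ∧ Z = 0) := by
  have hkey : E3 * (E1 * E2 - 1) = E1 + E2 := by linear_combination hdet
  have hD : 0 < E1 * E2 - 1 := by nlinarith
  have hident : (E1 * E2 - 1) * E1 *
        (E1 * X ^ 2 + E2 * Y ^ 2 + E3 * Z ^ 2 + 2 * X * Y + 2 * Y * Z)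
      = (E1 * E2 - 1) * (E1 * X + Y) ^ 2 + ((E1 * E2 - 1) * Y + E1 * Z) ^ 2
          + E1 * E2 * Z ^ 2 := by
    linear_combination (E1 * Z ^ 2) * hdet
  have t1 : 0 ≤ (E1 * E2 - 1) * (E1 * X + Y) ^ 2 := mul_nonneg hD.le (sq_nonneg _)
  have t2 : 0 ≤ ((E1 * E2 - 1) * Y + E1 * Z) ^ 2 := sq_nonneg _
  have t3 : 0 ≤ E1 * E2 * Z ^ 2 := mul_nonneg (mul_pos h1 h2).le (sq_nonneg _)
  have hC : 0 < (E1 * E2 - 1) * E1 := mul_pos hD h1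
  constructor
  · nlinarith [hident]
  · intro hQ
    have hsum0 : (E1 * E2 - 1) * (E1 * X + Y) ^ 2 + ((E1 * E2 - 1) * Y + E1 * Z) ^ 2
        + E1 * E2 * Z ^ 2 = 0 := by rw [← hident, hQ]; ring
    have e3 : E1 * E2 * Z ^ 2 = 0 := by linarith
    have e2 : ((E1 * E2 - 1) * Y + E1 * Z) ^ 2 = 0 := by linarith
    have e1 : (E1 * E2 - 1) * (E1 * X + Y) ^ 2 = 0 := by linarith
    have hZ : Z = 0 := by
      have := (mul_eq_zero.mp e3).resolve_left (mul_pos h1 h2).ne'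
      exact pow_eq_zero_iff (by norm_num) |>.mp this
    have hY : Y = 0 := by
      have h0 := pow_eq_zero_iff (n := 2) (by norm_num) |>.mp e2
      rw [hZ] at h0
      have : (E1 * E2 - 1) * Y = 0 := by linarith [h0]
      exact (mul_eq_zero.mp this).resolve_left hD.ne'
    have hX : X = 0 := by
      have h0 := (mul_eq_zero.mp e1).resolve_left hD.ne'
      have h0' := pow_eq_zero_iff (n := 2) (by norm_num) |>.mp h0
      rw [hY] at h0'
      have : E1 * X = 0 := by linarith [h0']
      exact (mul_eq_zero.mp this).resolve_left h1.ne'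
    exact ⟨hX, hY, hZ⟩

end Aux

theorem stmt16 [Field K] [NumberField K]
    (a : ℤ) (ha : -1 ≤ a) (ρ ρ' ρ'' : 𝓞 K)
    (h1 : ρ ^ 3 = (a : 𝓞 K) * ρ ^ 2 + ((a : 𝓞 K) + 3) * ρ + 1)
    (h2 : ρ' ^ 3 = (a : 𝓞 K) * ρ' ^ 2 + ((a : 𝓞 K) + 3) * ρ' + 1)
    (h3 : ρ'' ^ 3 = (a : 𝓞 K) * ρ'' ^ 2 + ((a : 𝓞 K) + 3) * ρ'' + 1)
    (hd1 : ρ ≠ ρ') (hd2 : ρ ≠ ρ'') (hd3 : ρ' ≠ ρ'')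
    (hlargest : ∃ φ : K →+* ℝ, (a : ℝ) + 1 < φ (algebraMap (𝓞 K) K ρ)) :
    Matrix.det !![1 + ρ + ρ ^ 2, 1, 0; 1, 1 + ρ' + ρ' ^ 2, 1; 0, 1, 1 + ρ'' + ρ'' ^ 2]
        = 1 + ρ' + ρ' ^ 2 ∧
      TPos (1 + ρ' + ρ' ^ 2) ∧
      (∀ x y z : 𝓞 K,
        TNonneg ((1 + ρ + ρ ^ 2) * x ^ 2 + (1 + ρ' + ρ' ^ 2) * y ^ 2 +
          (1 + ρ'' + ρ'' ^ 2) * z ^ 2 + 2 * x * y + 2 * y * z)) ∧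
      (∀ x y z : 𝓞 K,
        (1 + ρ + ρ ^ 2) * x ^ 2 + (1 + ρ' + ρ' ^ 2) * y ^ 2 +
          (1 + ρ'' + ρ'' ^ 2) * z ^ 2 + 2 * x * y + 2 * y * z = 0 →
        x = 0 ∧ y = 0 ∧ z = 0) := by
  have hinj : Function.Injective (algebraMap (𝓞 K) K) := IsFractionRing.injective _ _
  -- the determinant identity over 𝓞 K
  have hdetO := cubic_det_id ((a : 𝓞 K)) ρ ρ' ρ'' h1 h2 h3 hd1 hd2 hd3
  -- facts under an arbitrary real embedding
  have emb : ∀ φ : K →+* ℝ, ∀ x y z : 𝓞 K,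
      let ψ := φ.comp (algebraMap (𝓞 K) K)
      0 ≤ (1 + ψ ρ + ψ ρ ^ 2) * ψ x ^ 2 + (1 + ψ ρ' + ψ ρ' ^ 2) * ψ y ^ 2 +
          (1 + ψ ρ'' + ψ ρ'' ^ 2) * ψ z ^ 2 + 2 * ψ x * ψ y + 2 * ψ y * ψ z ∧
        ((1 + ψ ρ + ψ ρ ^ 2) * ψ x ^ 2 + (1 + ψ ρ' + ψ ρ' ^ 2) * ψ y ^ 2 +
          (1 + ψ ρ'' + ψ ρ'' ^ 2) * ψ z ^ 2 + 2 * ψ x * ψ y + 2 * ψ y * ψ z = 0 →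
          ψ x = 0 ∧ ψ y = 0 ∧ ψ z = 0) := by
    intro φ x y z ψ
    have hψinj : Function.Injective ψ := fun u v huv => hinj (φ.injective huv)
    have H1 : ψ ρ ^ 3 = (a : ℝ) * ψ ρ ^ 2 + ((a : ℝ) + 3) * ψ ρ + 1 := by
      have := congrArg ψ h1
      simpa [map_add, map_mul, map_pow, map_one, map_intCast, map_ofNat] using this
    have H2 : ψ ρ' ^ 3 = (a : ℝ) * ψ ρ' ^ 2 + ((a : ℝ) + 3) * ψ ρ' + 1 := by
      have := congrArg ψ h2
      simpa [map_add, map_mul, map_pow, map_one, map_intCast, map_ofNat] using this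
    have H3 : ψ ρ'' ^ 3 = (a : ℝ) * ψ ρ'' ^ 2 + ((a : ℝ) + 3) * ψ ρ'' + 1 := by
      have := congrArg ψ h3
      simpa [map_add, map_mul, map_pow, map_one, map_intCast, map_ofNat] using this
    have Hd1 : ψ ρ ≠ ψ ρ' := fun h => hd1 (hψinj h)
    have Hd2 : ψ ρ ≠ ψ ρ'' := fun h => hd2 (hψinj h)
    have Hd3 : ψ ρ' ≠ ψ ρ'' := fun h => hd3 (hψinj h)
    have hdetR := cubic_det_id ((a : ℝ)) (ψ ρ) (ψ ρ') (ψ ρ'') H1 H2 H3 Hd1 Hd2 Hd3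
    have hE1 : 0 < 1 + ψ ρ + ψ ρ ^ 2 := by nlinarith [sq_nonneg (ψ ρ + 1), sq_nonneg (ψ ρ)]
    have hE2 : 0 < 1 + ψ ρ' + ψ ρ' ^ 2 := by nlinarith [sq_nonneg (ψ ρ' + 1), sq_nonneg (ψ ρ')]
    have hE3 : 0 < 1 + ψ ρ'' + ψ ρ'' ^ 2 := by nlinarith [sq_nonneg (ψ ρ'' + 1), sq_nonneg (ψ ρ'')]
    exact real_pd _ _ _ (ψ x) (ψ y) (ψ z) hE1 hE2 hE3 hdetR
  have hmapQ : ∀ φ : K →+* ℝ, ∀ x y z : 𝓞 K,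
      let ψ := φ.comp (algebraMap (𝓞 K) K)
      φ (algebraMap (𝓞 K) K ((1 + ρ + ρ ^ 2) * x ^ 2 + (1 + ρ' + ρ' ^ 2) * y ^ 2 +
          (1 + ρ'' + ρ'' ^ 2) * z ^ 2 + 2 * x * y + 2 * y * z))
        = (1 + ψ ρ + ψ ρ ^ 2) * ψ x ^ 2 + (1 + ψ ρ' + ψ ρ' ^ 2) * ψ y ^ 2 +
          (1 + ψ ρ'' + ψ ρ'' ^ 2) * ψ z ^ 2 + 2 * ψ x * ψ y + 2 * ψ y * ψ z := by
    intro φ x y z ψ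
    show ψ _ = _
    simp [map_add, map_mul, map_pow, map_one, map_ofNat]
  refine ⟨?_, ?_, ?_, ?_⟩
  · simp [Matrix.det_fin_three]
    linear_combination hdetO
  · intro φ
    set ψ := φ.comp (algebraMap (𝓞 K) K) with hψ
    show (0 : ℝ) < ψ (1 + ρ' + ρ' ^ 2)
    have : ψ (1 + ρ' + ρ' ^ 2) = 1 + ψ ρ' + ψ ρ' ^ 2 := by
      simp [map_add, map_pow, map_one]
    rw [this]
    nlinarith [sq_nonneg (ψ ρ' + 1), sq_nonneg (ψ ρ')]
  · intro x y z
    by_cases h0 : x = 0 ∧ y = 0 ∧ z = 0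
    · right
      obtain ⟨hx, hy, hz⟩ := h0
      subst hx; subst hy; subst hz; ring
    · left
      intro φ
      have hE := emb φ x y z
      have hm := hmapQ φ x y z
      set ψ := φ.comp (algebraMap (𝓞 K) K) with hψ
      rw [show φ (algebraMap (𝓞 K) K ((1 + ρ + ρ ^ 2) * x ^ 2 + (1 + ρ' + ρ' ^ 2) * y ^ 2 +
          (1 + ρ'' + ρ'' ^ 2) * z ^ 2 + 2 * x * y + 2 * y * z)) = _ from hm]
      rcases lt_or_eq_of_le hE.1 with hlt | heq
      · exact hlt
      · exfalso
        obtain ⟨hx, hy, hz⟩ := hE.2 heq.symm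
        have hψinj : Function.Injective ψ := fun u v huv => hinj (φ.injective huv)
        exact h0 ⟨hψinj (by simpa using hx), hψinj (by simpa using hy),
          hψinj (by simpa using hz)⟩
  · intro x y z hQ
    obtain ⟨φ, -⟩ := hlargest
    have hE := emb φ x y z
    have hm := hmapQ φ x y z
    set ψ := φ.comp (algebraMap (𝓞 K) K) with hψ
    have hQ0 : (1 + ψ ρ + ψ ρ ^ 2) * ψ x ^ 2 + (1 + ψ ρ' + ψ ρ' ^ 2) * ψ y ^ 2 +
        (1 + ψ ρ'' + ψ ρ'' ^ 2) * ψ z ^ 2 + 2 * ψ x * ψ y + 2 * ψ y * ψ z = 0 := by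
      rw [← hm, hQ]
      simp
    obtain ⟨hx, hy, hz⟩ := hE.2 hQ0
    have hψinj : Function.Injective ψ := fun u v huv => hinj (φ.injective huv)
    exact ⟨hψinj (by simpa using hx), hψinj (by simpa using hy), hψinj (by simpa using hz)⟩
end

section
/- Let K = Q(ρ) be a simplest cubic field with O_K = Z[ρ], and define α(v,w) = −v − wρ + (v+1)ρ² for integers 0 ≤ v ≤ a and v(a+2)+1 ≤ w ≤ (v+1)(a+1). If 0 ≤ v ≤ (a−1)/2 and ((2v+1)(a+2)+1)/2 ≤ w ≤ (v+1)(a+1), then 2α(v,w) − 1 = α(2v+1, 2w) is again of the form α(v',w') with parameters in the valid ranges; in particular 2α(v,w) − 1 is totally positive. -/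
open NumberField

variable {K : Type*}

lemma key (A V W t : ℝ) (hA : 1 ≤ A) (hV : 0 ≤ V) (hVA : 2*V+1 ≤ A)
    (hW1 : (2*V+1)*(A+2)+1 ≤ 2*W) (hW2 : W ≤ (V+1)*(A+1))
    (ht : t^3 = A*t^2 + (A+3)*t + 1) :
    0 < 2*(-V - W*t + (V+1)*t^2) - 1 := by
  have htne : t ≠ 0 := by rintro rfl; simp at ht
  rcases lt_or_gt_of_ne htne with hneg | hpos
  · -- t < 0; set s = -t > 0
    set s : ℝ := -t with hsdef
    have hs0 : 0 < s := by simp [hsdef]; linarith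
    have hE : (A+3)*s = 1 + A*s^2 + s^3 := by
      simp only [hsdef]; nlinarith [ht]
    set C : ℝ := (2*V+1)*A*s + (2*V+1)*s^2 + (2*V+2)*s - 2*V with hCdef
    have hCeq : C = (2*V+1)*(A*s^2) + (2*V+1)*s^3 + (2*V+1)*s^2 - (4*V+1)*s + 1 := by
      rw [hCdef]; linear_combination (2*V+1) * hE
    have hC'pos : 0 < (2*V+1)^2*s^2 - (4*V+1)*s + 1 := by
      have hid : 4*(2*V+1)^2 * ((2*V+1)^2*s^2 - (4*V+1)*s + 1)
          = (2*(2*V+1)^2*s - (4*V+1))^2 + (8*V+3) := by ring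
      nlinarith [sq_nonneg (2*(2*V+1)^2*s - (4*V+1)), sq_nonneg (2*V+1)]
    have hC : 0 < C := by
      rw [hCeq]
      nlinarith [mul_nonneg (mul_nonneg (by linarith : (0:ℝ) ≤ 2*V+1) (by linarith : (0:ℝ) ≤ A - (2*V+1))) (sq_nonneg s),
        mul_nonneg (mul_nonneg (by linarith : (0:ℝ) ≤ 2*V+1) (le_of_lt hs0)) (sq_nonneg s),
        mul_nonneg (by linarith : (0:ℝ) ≤ 2*V+1) (sq_nonneg s)]
    have hT : 2*(-V - W*t + (V+1)*t^2) - 1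
        = (2*W - ((2*V+1)*(A+2)+1))*s + s*C := by
      rw [hCdef]; simp only [hsdef]; linear_combination (2*V+1) * hE
    rw [hT]
    have h1 : 0 ≤ (2*W - ((2*V+1)*(A+2)+1))*s :=
      mul_nonneg (by linarith) (le_of_lt hs0)
    nlinarith [mul_pos hs0 hC]
  · -- t > 0
    have h2 : t^2 - A*t - (A+3) > 0 := by
      rcases lt_trichotomy (t^2 - A*t - (A+3)) 0 with h | h | h
      · nlinarith
      · nlinarith
      · exact h
    have hA1 : t > A + 1 := by nlinarith
    nlinarith [mul_pos hpos (by linarith : (0:ℝ) < t - (A+1)),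
      mul_nonneg (by nlinarith : (0:ℝ) ≤ (V+1)*(A+1) - W) (le_of_lt hpos),
      mul_pos hpos hpos]

theorem stmt17 [Field K] [NumberField K]
    (a : ℤ) (ha : -1 ≤ a) (ρ : 𝓞 K)
    (hρ : ρ ^ 3 = (a : 𝓞 K) * ρ ^ 2 + ((a : 𝓞 K) + 3) * ρ + 1)
    (hlargest : ∃ φ : K →+* ℝ, (a : ℝ) + 1 < φ (algebraMap (𝓞 K) K ρ))
    (hgen : Algebra.adjoin ℤ {ρ} = (⊤ : Subalgebra ℤ (𝓞 K)))
    (v w : ℤ) (hv0 : 0 ≤ v) (hv : 2 * v ≤ a - 1)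
    (hw1 : (2 * v + 1) * (a + 2) + 1 ≤ 2 * w) (hw2 : w ≤ (v + 1) * (a + 1)) :
    (0 ≤ 2 * v + 1 ∧ 2 * v + 1 ≤ a ∧
      (2 * v + 1) * (a + 2) + 1 ≤ 2 * w ∧ 2 * w ≤ ((2 * v + 1) + 1) * (a + 1)) ∧
    2 * (-(v : 𝓞 K) - (w : 𝓞 K) * ρ + ((v : 𝓞 K) + 1) * ρ ^ 2) - 1 =
      -((2 * v + 1 : ℤ) : 𝓞 K) - ((2 * w : ℤ) : 𝓞 K) * ρ +
        (((2 * v + 1 : ℤ) : 𝓞 K) + 1) * ρ ^ 2 ∧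
    TPos (2 * (-(v : 𝓞 K) - (w : 𝓞 K) * ρ + ((v : 𝓞 K) + 1) * ρ ^ 2) - 1) := by
  
  have ha1 : 1 ≤ a := by omega
  refine ⟨⟨by omega, by omega, hw1, by nlinarith⟩, by push_cast; ring, ?_⟩
  intro φ
  set ψ : 𝓞 K →+* ℝ := φ.comp (algebraMap (𝓞 K) K) with hψ
  have hval : ∀ x : 𝓞 K, φ (algebraMap (𝓞 K) K x) = ψ x := fun x => rfl
  rw [hval]
  have hmap : (ψ ρ)^3 = (a:ℝ)*(ψ ρ)^2 + ((a:ℝ)+3)*(ψ ρ) + 1 := by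
    have := congrArg ψ hρ
    simpa [map_pow, map_mul, map_add, map_one, map_intCast, map_ofNat] using this
  have hgoal : ψ (2 * (-(v : 𝓞 K) - (w : 𝓞 K) * ρ + ((v : 𝓞 K) + 1) * ρ ^ 2) - 1)
      = 2*(-(v:ℝ) - (w:ℝ)*(ψ ρ) + ((v:ℝ)+1)*(ψ ρ)^2) - 1 := by
    simp [map_pow, map_mul, map_add, map_sub, map_neg, map_one, map_intCast, map_ofNat]
    try ring
  rw [hgoal]
  have hcast : ∀ m n : ℤ, m ≤ n → (m:ℝ) ≤ (n:ℝ) := fun m n h => by exact_mod_cast h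
  apply key (a:ℝ) (v:ℝ) (w:ℝ) (ψ ρ)
  · exact_mod_cast ha1
  · exact_mod_cast hv0
  · have : 2*v+1 ≤ a := by omega
    exact_mod_cast this
  · exact_mod_cast hw1
  · exact_mod_cast hw2
  · exact hmap
end
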